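/- arXiv:1412.1933 — 5 statements merged into one kernel-verified Lean document; each statement's English description precedes it below -/
import Mathlib

section
/- (Bregman–Minc inequality) Let A be an n×n matrix with all entries equal to 0 or 1, and let r_i be the number of 1's in the i-th row of A. Assume r_i ≥ 1 for all i. Then per A ≤ ∏_{i=1}^n (r_i!)^{1/r_i}. -/
open Finset

lemma bm_convexity {ι : Type*} (s : Finset ι) (c : ι → ℕ) :
    ((∑ k ∈ s, c k : ℕ) : ℝ) ^ (∑ k ∈ s, c k) ≤
      (s.card : ℝ) ^ (∑ k ∈ s, c k) * ∏ k ∈ s, (c k : ℝ) ^ (c k) := by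
  by_cases hT0 : (∑ k ∈ s, c k) = 0
  · have hc : ∀ k ∈ s, c k = 0 := fun k hk => by
      have := Finset.sum_eq_zero_iff.mp hT0; exact this k hk
    rw [hT0]
    have : ∏ k ∈ s, (c k : ℝ) ^ (c k) = 1 := by
      apply Finset.prod_eq_one
      intro k hk; rw [hc k hk]; norm_num
    rw [this]; norm_num
  · set T := ∑ k ∈ s, c k with hT
    have hTpos : 0 < T := Nat.pos_of_ne_zero hT0
    have hs : s.Nonempty := by
      rcases s.eq_empty_or_nonempty with h | h
      · exfalso; apply hT0; rw [hT, h, Finset.sum_empty]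
      · exact h
    have hr : (0:ℝ) < (s.card : ℝ) := by
      exact_mod_cast Finset.card_pos.mpr hs
    have hTR : (0:ℝ) < (T:ℝ) := by exact_mod_cast hTpos
    set r := s.card with hrdef
    -- z k := T / (r * c k), w k := c k / T
    have hwsum : ∑ k ∈ s, (c k : ℝ) / T = 1 := by
      rw [← Finset.sum_div]
      rw [div_eq_one_iff_eq (ne_of_gt hTR)]
      exact_mod_cast rfl
    have amgm := Real.geom_mean_le_arith_mean_weighted s
        (fun k => (c k : ℝ) / T) (fun k => (T:ℝ) / ((r:ℝ) * c k))
        (fun k _ => by positivity) hwsum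
        (fun k _ => by positivity)
    have hsumle : ∑ k ∈ s, ((c k : ℝ) / T) * ((T:ℝ) / ((r:ℝ) * c k)) ≤ 1 := by
      have : ∀ k ∈ s, ((c k : ℝ) / T) * ((T:ℝ) / ((r:ℝ) * c k)) ≤ 1 / r := by
        intro k _
        rcases eq_or_ne (c k) 0 with h | h
        · rw [h]; push_cast; rw [mul_zero, div_zero, mul_zero]; positivity
        · have hck : (0:ℝ) < (c k : ℝ) := by exact_mod_cast Nat.pos_of_ne_zero h
          have heq : ((c k : ℝ) / T) * ((T:ℝ) / ((r:ℝ) * c k)) = 1/r := by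
            field_simp
          rw [heq]
      calc ∑ k ∈ s, ((c k : ℝ) / T) * ((T:ℝ) / ((r:ℝ) * c k))
          ≤ ∑ k ∈ s, (1:ℝ)/r := Finset.sum_le_sum this
        _ = 1 := by rw [Finset.sum_const, nsmul_eq_mul]; field_simp; rfl
    have key1 : ∏ k ∈ s, ((T:ℝ) / ((r:ℝ) * c k)) ^ ((c k : ℝ)/T) ≤ 1 :=
      le_trans amgm hsumle
    have key2 : ∏ k ∈ s, ((T:ℝ) / ((r:ℝ) * c k)) ^ (c k : ℕ) ≤ 1 := by
      have h1 : ∏ k ∈ s, ((T:ℝ) / ((r:ℝ) * c k)) ^ (c k : ℕ)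
          = (∏ k ∈ s, ((T:ℝ) / ((r:ℝ) * c k)) ^ ((c k : ℝ)/T)) ^ (T:ℝ) := by
        rw [← Real.finset_prod_rpow _ _ (fun k _ => Real.rpow_nonneg (by positivity) _) _]
        apply Finset.prod_congr rfl
        intro k _
        rw [← Real.rpow_natCast (((T:ℝ) / ((r:ℝ) * c k))) (c k), ← Real.rpow_mul (by positivity)]
        congr 1
        field_simp
      rw [h1]
      exact Real.rpow_le_one (Finset.prod_nonneg fun k _ => Real.rpow_nonneg (by positivity) _)
        key1 (le_of_lt hTR)
    -- now expand
    have expand : ∏ k ∈ s, ((T:ℝ) / ((r:ℝ) * c k)) ^ (c k : ℕ)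
        = ((T:ℝ)^T) / ((r:ℝ)^T * ∏ k ∈ s, (c k : ℝ) ^ (c k)) := by
      simp_rw [div_pow]
      rw [Finset.prod_div_distrib]
      congr 1
      · rw [Finset.prod_pow_eq_pow_sum]
      · simp_rw [mul_pow]
        rw [Finset.prod_mul_distrib, Finset.prod_pow_eq_pow_sum]
    rw [expand] at key2
    have hden : (0:ℝ) < (r:ℝ)^T * ∏ k ∈ s, (c k : ℝ) ^ (c k) := by
      apply mul_pos (by positivity)
      apply Finset.prod_pos
      intro k _
      rcases eq_or_ne (c k) 0 with h | h
      · rw [h]; norm_num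
      · have : (0:ℝ) < (c k:ℝ) := by exact_mod_cast Nat.pos_of_ne_zero h
        positivity
    rw [div_le_one hden] at key2
    exact_mod_cast key2

variable {α : Type} [Fintype α] [DecidableEq α]

def permSet (M : α → α → Prop) [DecidableRel M] : Finset (Equiv.Perm α) :=
  univ.filter (fun σ => ∀ i, M i (σ i))

def deg (M : α → α → Prop) [DecidableRel M] (i : α) : ℕ :=
  (univ.filter (fun j => M i j)).card

lemma mem_permSet {M : α → α → Prop} [DecidableRel M] {σ : Equiv.Perm α} :
    σ ∈ permSet M ↔ ∀ i, M i (σ i) := by simp [permSet]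

/-- extension of a permutation of `{x // x ≠ i}` to a permutation of `α` sending `i` to `k`,
via a bijection `e : {x // x ≠ i} ≃ {x // x ≠ k}`. -/
def extPerm (i k : α) (e : {x : α // x ≠ i} ≃ {x : α // x ≠ k})
    (τ : Equiv.Perm {x : α // x ≠ i}) : Equiv.Perm α where
  toFun x := if h : x = i then k else (e (τ ⟨x, h⟩)).val
  invFun y := if h : y = k then i else (τ.symm (e.symm ⟨y, h⟩)).val
  left_inv x := by
    by_cases h : x = i
    · subst h; simp
    · simp only [dif_neg h]
      have hne : ((e (τ ⟨x, h⟩)) : α) ≠ k := (e (τ ⟨x, h⟩)).2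
      rw [dif_neg hne]
      simp
  right_inv y := by
    by_cases h : y = k
    · subst h; simp
    · simp only [dif_neg h]
      have hne : ((τ.symm (e.symm ⟨y, h⟩)) : α) ≠ i := (τ.symm (e.symm ⟨y, h⟩)).2
      rw [dif_neg hne]
      simp

lemma bm_minor_card (M : α → α → Prop) [DecidableRel M]
    (i k : α) (hik : M i k) (e : {x : α // x ≠ i} ≃ {x : α // x ≠ k}) :
    ((permSet M).filter (fun σ => σ i = k)).card
      = (permSet (fun a b : {x : α // x ≠ i} => M a.val (e b).val)).card := by
  refine Finset.card_bij'
    (fun σ hσ =>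
      (σ.subtypeEquiv (p := fun x => x ≠ i) (q := fun x => x ≠ k) (fun a => by
        have hk : σ i = k := (Finset.mem_filter.mp hσ).2
        rw [← hk]
        exact not_congr (Equiv.apply_eq_iff_eq σ).symm)).trans e.symm)
    (fun τ _ => extPerm i k e τ) ?hi ?hj ?left ?right
  case hi =>
    intro σ hσ
    rw [mem_permSet]
    intro a
    have hσS : ∀ x, M x (σ x) := mem_permSet.mp (Finset.mem_filter.mp hσ).1
    simpa using hσS a.val
  case hj =>
    intro τ hτ
    rw [Finset.mem_filter]
    constructor
    · rw [mem_permSet]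
      intro x
      by_cases h : x = i
      · show M x (if h : x = i then k else (e (τ ⟨x, h⟩)).val)
        rw [dif_pos h, h]
        exact hik
      · show M x (if h' : x = i then k else (e (τ ⟨x, h'⟩)).val)
        rw [dif_neg h]
        exact mem_permSet.mp hτ ⟨x, h⟩
    · show (if h : i = i then k else _) = k
      rw [dif_pos rfl]
  case left =>
    intro σ hσ
    ext x
    show (if h : x = i then k else _) = σ x
    by_cases h : x = i
    · rw [dif_pos h, h]
      exact ((Finset.mem_filter.mp hσ).2).symm
    · rw [dif_neg h]
      simp
  case right =>
    intro τ hτ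
    ext a
    have h1 : (extPerm i k e τ) a.val = (e (τ a)).val := by
      show (if h : a.val = i then k else (e (τ ⟨a.val, h⟩)).val) = _
      rw [dif_neg a.2]
    simp only [Equiv.trans_apply, Equiv.subtypeEquiv_apply]
    have h2 : (⟨(extPerm i k e τ) a.val, by rw [h1]; exact (e (τ a)).2⟩ : {x : α // x ≠ k}) = e (τ a) :=
      Subtype.ext h1
    rw [h2, Equiv.symm_apply_apply]

lemma bm_minor_deg (M : α → α → Prop) [DecidableRel M] (i k : α)
    (e : {x : α // x ≠ i} ≃ {x : α // x ≠ k}) (a : {x : α // x ≠ i}) :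
    deg (fun a b : {x : α // x ≠ i} => M a.val (e b).val) a
      = deg M a.val - (if M a.val k then 1 else 0) := by
  have h1 : (univ.filter (fun b : {x : α // x ≠ i} => M a.val (e b).val)).card
      = ((univ.filter (fun y => M a.val y)).erase k).card := by
    refine Finset.card_bij' (fun b _ => (e b).val)
      (fun y hy => e.symm ⟨y, (Finset.mem_erase.mp hy).1⟩) ?hi ?hj ?left ?right
    case hi =>
      intro b hb
      rw [Finset.mem_erase]
      exact ⟨(e b).2, by simpa using (Finset.mem_filter.mp hb).2⟩
    case hj =>
      intro y hy
      simp only [Finset.mem_filter, Finset.mem_univ, true_and]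
      have := (Finset.mem_filter.mp (Finset.mem_erase.mp hy).2).2
      simpa using this
    case left =>
      intro b _
      simp
    case right =>
      intro y hy
      simp
  rw [deg, deg, h1]
  by_cases h : M a.val k
  · rw [if_pos h, Finset.card_erase_of_mem (by simp [h])]
  · rw [if_neg h, Finset.erase_eq_of_notMem (by simp [h])]
    simp

theorem bm_key : ∀ (n : ℕ) (α : Type) [Fintype α] [DecidableEq α]
    (M : α → α → Prop) [DecidableRel M], Fintype.card α = n →
    ((permSet M).card : ℝ) ≤ ∏ i, ((deg M i).factorial : ℝ) ^ ((1:ℝ) / (deg M i)) := by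
  intro n
  induction n with
  | zero =>
    intro α _ _ M _ hcard
    have hempty : IsEmpty α := Fintype.card_eq_zero_iff.mp hcard
    have h1 : (permSet M).card ≤ 1 := by
      calc (permSet M).card ≤ Fintype.card (Equiv.Perm α) := by
            rw [← Finset.card_univ]; exact Finset.card_le_univ _
        _ = (Fintype.card α).factorial := Fintype.card_perm
        _ = 1 := by rw [hcard]; rfl
    have h2 : ∏ i : α, ((deg M i).factorial : ℝ) ^ ((1:ℝ)/(deg M i)) = 1 := by
      rw [Finset.univ_eq_empty, Finset.prod_empty]
    rw [h2]
    exact_mod_cast h1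
  | succ m IH =>
    intro α _ _ M _ hcard
    set S := permSet M with hS
    set p := S.card with hpdef
    by_cases hp0 : p = 0
    · rw [hp0]
      push_cast
      apply Finset.prod_nonneg
      intro j _
      apply Real.rpow_nonneg
      positivity
    have hSne : S.Nonempty := Finset.card_pos.mp (Nat.pos_of_ne_zero hp0)
    obtain ⟨σ₀, hσ₀⟩ := hSne
    set d := deg M with hd
    have hd1 : ∀ j, 1 ≤ d j := by
      intro j
      have hmem : σ₀ j ∈ univ.filter (fun y => M j y) := by
        simp [mem_permSet.mp hσ₀ j]
      exact Finset.card_pos.mpr ⟨_, hmem⟩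
    have hdn : ∀ j, d j ≤ m + 1 := by
      intro j
      calc d j ≤ Fintype.card α := by
            rw [← Finset.card_univ]; exact Finset.card_le_univ _
        _ = m + 1 := hcard
    set q : α → α → ℕ := fun i k => (S.filter (fun σ => σ i = k)).card with hq
    -- row sums
    have hrow : ∀ i, ∑ k ∈ univ.filter (fun y => M i y), q i k = p := by
      intro i
      rw [hpdef]
      exact (Finset.card_eq_sum_card_fiberwise (fun σ hσ => by
        simp [mem_permSet.mp hσ i])).symm
    -- step 1 : convexity per row
    have step1 : ∀ i, ((p:ℝ))^p ≤ ((d i : ℝ))^p * ∏ σ ∈ S, (q i (σ i) : ℝ) := by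
      intro i
      have hconv := bm_convexity (univ.filter (fun y => M i y)) (q i)
      rw [hrow i] at hconv
      have hfib : ∏ σ ∈ S, (q i (σ i) : ℝ)
          = ∏ k ∈ univ.filter (fun y => M i y), (q i k : ℝ) ^ (q i k) := by
        have hfw := Finset.prod_fiberwise_of_maps_to (s := S)
            (t := univ.filter fun y => M i y) (g := fun σ => σ i)
            (fun σ hσ => by simp [mem_permSet.mp hσ i]) (fun σ => (q i (σ i) : ℝ))
        rw [← hfw]
        apply Finset.prod_congr rfl
        intro k _
        have hcongr : ∀ σ ∈ S.filter (fun σ => σ i = k), (q i (σ i) : ℝ) = (q i k : ℝ) := by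
          intro σ hσ; rw [(Finset.mem_filter.mp hσ).2]
        rw [Finset.prod_congr rfl hcongr, Finset.prod_const]
      rw [hfib]
      exact hconv
    -- step B : minor bound via IH
    have stepB : ∀ i k, M i k → (q i k : ℝ) ≤ ∏ j ∈ univ.erase i,
        (((d j - if M j k then 1 else 0).factorial : ℝ))
          ^ ((1:ℝ)/((d j - if M j k then 1 else 0) : ℕ)) := by
      intro i k hik
      have hcardβ : Fintype.card {x : α // x ≠ i} = m := by
        have h := Fintype.card_subtype_compl (fun x : α => x = i)
        rw [Fintype.card_subtype_eq, hcard] at h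
        simpa using h
      have hcardγ : Fintype.card {x : α // x ≠ k} = m := by
        have h := Fintype.card_subtype_compl (fun x : α => x = k)
        rw [Fintype.card_subtype_eq, hcard] at h
        simpa using h
      have e : {x : α // x ≠ i} ≃ {x : α // x ≠ k} :=
        Fintype.equivOfCardEq (hcardβ.trans hcardγ.symm)
      have hbij := bm_minor_card M i k hik e
      have hIH := IH {x : α // x ≠ i} (fun a b => M a.val (e b).val) hcardβ
      rw [← hbij] at hIH
      refine le_trans hIH (le_of_eq ?_)
      calc (∏ a : {x : α // x ≠ i},
              (((deg (fun a b : {x : α // x ≠ i} => M a.val (e b).val) a).factorial : ℝ))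
                ^ ((1:ℝ)/(deg (fun a b : {x : α // x ≠ i} => M a.val (e b).val) a)))
          = ∏ a : {x : α // x ≠ i},
              (((d a.val - if M a.val k then 1 else 0).factorial : ℝ))
                ^ ((1:ℝ)/((d a.val - if M a.val k then 1 else 0) : ℕ)) := by
            apply Finset.prod_congr rfl
            intro a _
            rw [bm_minor_deg M i k e a]
        _ = ∏ j ∈ univ.erase i,
              (((d j - if M j k then 1 else 0).factorial : ℝ))
                ^ ((1:ℝ)/((d j - if M j k then 1 else 0) : ℕ)) := by
            exact (Finset.prod_subtype (univ.erase i) (p := fun x => x ≠ i)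
              (fun x => by simp)
              (fun j => (((d j - if M j k then 1 else 0).factorial : ℝ))
                ^ ((1:ℝ)/((d j - if M j k then 1 else 0) : ℕ)))).symm
    -- step E : inner product evaluation
    have stepE : ∀ σ ∈ S, ∀ j : α, ∏ i ∈ univ.erase j,
        (((d j - if M j (σ i) then 1 else 0).factorial : ℝ))
          ^ ((1:ℝ)/((d j - if M j (σ i) then 1 else 0) : ℕ))
        = ((d j - 1).factorial : ℝ)
            * ((d j).factorial : ℝ) ^ ((((m+1-d j : ℕ)):ℝ)/(d j)) := by
      intro σ hσ j
      have hcount : ((univ.erase j).filter (fun i => M j (σ i))).card = d j - 1 := by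
        have hbij2 : ((univ.erase j).filter (fun i => M j (σ i))).card
            = ((univ.filter (fun y => M j y)).erase (σ j)).card := by
          refine Finset.card_bij' (fun x _ => σ x) (fun y _ => σ.symm y) ?hi ?hj ?left ?right
          case hi =>
            intro x hx
            obtain ⟨hx1, hx2⟩ := Finset.mem_filter.mp hx
            rw [Finset.mem_erase]
            refine ⟨fun hcontra => (Finset.mem_erase.mp hx1).1 (σ.injective hcontra), ?_⟩
            simp [hx2]
          case hj =>
            intro y hy
            obtain ⟨hy1, hy2⟩ := Finset.mem_erase.mp hy
            rw [Finset.mem_filter, Finset.mem_erase]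
            refine ⟨⟨fun hcontra => hy1 ?_, Finset.mem_univ _⟩, ?_⟩
            · rw [← hcontra]; simp
            · simpa using (Finset.mem_filter.mp hy2).2
          case left => intro x _; simp
          case right => intro y _; simp
        rw [hbij2, Finset.card_erase_of_mem (by simp [mem_permSet.mp hσ j])]
        rfl
      have hcard_erase : (univ.erase j).card = m := by
        rw [Finset.card_erase_of_mem (Finset.mem_univ j), Finset.card_univ, hcard]
        omega
      have hcount' : ((univ.erase j).filter (fun i => ¬ M j (σ i))).card = m + 1 - d j := by
        have htot := Finset.card_filter_add_card_filter_not
          (s := univ.erase j) (p := fun i => M j (σ i))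
        rw [hcount, hcard_erase] at htot
        have := hd1 j
        have := hdn j
        omega
      rw [← Finset.prod_filter_mul_prod_filter_not (univ.erase j) (fun i => M j (σ i))]
      have h1 : ∏ i ∈ (univ.erase j).filter (fun i => M j (σ i)),
          (((d j - if M j (σ i) then 1 else 0).factorial : ℝ))
            ^ ((1:ℝ)/((d j - if M j (σ i) then 1 else 0) : ℕ))
          = ((((d j - 1).factorial : ℝ)) ^ ((1:ℝ)/((d j - 1) : ℕ))) ^ (d j - 1) := by
        rw [Finset.prod_congr rfl (fun i hi => by
          rw [if_pos (Finset.mem_filter.mp hi).2]), Finset.prod_const, hcount]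
      have h2 : ∏ i ∈ (univ.erase j).filter (fun i => ¬ M j (σ i)),
          (((d j - if M j (σ i) then 1 else 0).factorial : ℝ))
            ^ ((1:ℝ)/((d j - if M j (σ i) then 1 else 0) : ℕ))
          = ((((d j).factorial : ℝ)) ^ ((1:ℝ)/(d j : ℕ))) ^ (m + 1 - d j) := by
        rw [Finset.prod_congr rfl (fun i hi => by
          rw [if_neg (Finset.mem_filter.mp hi).2]), Finset.prod_const, hcount']
        simp
      rw [h1, h2]
      have e1 : ((((d j - 1).factorial : ℝ)) ^ ((1:ℝ)/((d j - 1) : ℕ))) ^ (d j - 1)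
          = ((d j - 1).factorial : ℝ) := by
        rcases Nat.eq_zero_or_pos (d j - 1) with h | h
        · rw [h]; simp
        · rw [← Real.rpow_natCast ((((d j - 1).factorial : ℝ)) ^ ((1:ℝ)/((d j - 1) : ℕ))) (d j - 1),
            ← Real.rpow_mul (by positivity)]
          rw [one_div, inv_mul_cancel₀ (by exact_mod_cast Nat.pos_iff_ne_zero.mp h), Real.rpow_one]
      have e2 : ((((d j).factorial : ℝ)) ^ ((1:ℝ)/(d j : ℕ))) ^ (m + 1 - d j)
          = ((d j).factorial : ℝ) ^ ((((m+1-d j : ℕ)):ℝ)/(d j)) := by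
        rw [← Real.rpow_natCast ((((d j).factorial : ℝ)) ^ ((1:ℝ)/(d j : ℕ))) (m + 1 - d j),
          ← Real.rpow_mul (by positivity)]
        congr 1
        rw [one_div]
        field_simp
      rw [e1, e2]
    -- main chain
    have main : ((p:ℝ))^((m+1)*p)
        ≤ (∏ j : α, ((d j).factorial : ℝ) ^ (((m+1:ℕ):ℝ)/(d j)))^p := by
      calc ((p:ℝ))^((m+1)*p) = ∏ _i : α, ((p:ℝ))^p := by
            rw [Finset.prod_const, Finset.card_univ, hcard, ← pow_mul, mul_comm]
        _ ≤ ∏ i : α, (((d i : ℝ))^p * ∏ σ ∈ S, (q i (σ i) : ℝ)) := by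
            apply Finset.prod_le_prod (fun i _ => by positivity) (fun i _ => step1 i)
        _ = (∏ i : α, (d i : ℝ)^p) * ∏ σ ∈ S, ∏ i : α, (q i (σ i) : ℝ) := by
            rw [Finset.prod_mul_distrib]
            congr 1
            exact Finset.prod_comm
        _ ≤ (∏ i : α, (d i : ℝ)^p) * ∏ σ ∈ S, ∏ j : α,
              (((d j - 1).factorial : ℝ)
                * ((d j).factorial : ℝ) ^ ((((m+1-d j : ℕ)):ℝ)/(d j))) := by
            apply mul_le_mul_of_nonneg_left ?_ (by positivity)
            apply Finset.prod_le_prod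
              (fun σ _ => Finset.prod_nonneg (fun i _ => by positivity))
            intro σ hσ
            calc ∏ i : α, (q i (σ i) : ℝ)
                ≤ ∏ i : α, ∏ j ∈ univ.erase i,
                    (((d j - if M j (σ i) then 1 else 0).factorial : ℝ))
                      ^ ((1:ℝ)/((d j - if M j (σ i) then 1 else 0) : ℕ)) := by
                  apply Finset.prod_le_prod (fun i _ => by positivity)
                  intro i _
                  exact stepB i (σ i) (mem_permSet.mp hσ i)
              _ = ∏ j : α, ∏ i ∈ univ.erase j,
                    (((d j - if M j (σ i) then 1 else 0).factorial : ℝ))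
                      ^ ((1:ℝ)/((d j - if M j (σ i) then 1 else 0) : ℕ)) := by
                  apply Finset.prod_comm' (fun x y => by
                    simp [Finset.mem_erase, ne_comm, and_comm])
              _ = ∏ j : α, (((d j - 1).factorial : ℝ)
                    * ((d j).factorial : ℝ) ^ ((((m+1-d j : ℕ)):ℝ)/(d j))) := by
                  exact Finset.prod_congr rfl (fun j _ => stepE σ hσ j)
        _ = (∏ i : α, (d i : ℝ)^p) * (∏ j : α, (((d j - 1).factorial : ℝ)
              * ((d j).factorial : ℝ) ^ ((((m+1-d j : ℕ)):ℝ)/(d j))))^p := by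
            rw [Finset.prod_const, hpdef]
        _ = (∏ j : α, ((d j : ℝ) * (((d j - 1).factorial : ℝ)
              * ((d j).factorial : ℝ) ^ ((((m+1-d j : ℕ)):ℝ)/(d j)))))^p := by
            rw [Finset.prod_pow, ← mul_pow, ← Finset.prod_mul_distrib]
        _ = (∏ j : α, ((d j).factorial : ℝ) ^ (((m+1:ℕ):ℝ)/(d j)))^p := by
            congr 1
            apply Finset.prod_congr rfl
            intro j _
            have hfac : (d j : ℝ) * ((d j - 1).factorial : ℝ) = ((d j).factorial : ℝ) := by
              exact_mod_cast Nat.mul_factorial_pred (Nat.one_le_iff_ne_zero.mp (hd1 j))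
            have hxpos : (0:ℝ) < ((d j).factorial : ℝ) := by
              exact_mod_cast (d j).factorial_pos
            rw [← mul_assoc, hfac]
            nth_rewrite 1 [← Real.rpow_one ((d j).factorial : ℝ)]
            rw [← Real.rpow_add hxpos]
            congr 1
            have hsub : ((m+1-d j : ℕ) : ℝ) = (m+1 : ℝ) - (d j : ℝ) := by
              push_cast [Nat.cast_sub (hdn j)]
              ring
            have hdj : ((d j : ℕ) : ℝ) ≠ 0 := by
              exact_mod_cast Nat.one_le_iff_ne_zero.mp (hd1 j)
            rw [hsub]
            push_cast
            field_simp
            ring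
    -- conclude
    have hRHSeq : ∏ j : α, ((d j).factorial : ℝ) ^ (((m+1:ℕ):ℝ)/(d j))
        = (∏ j : α, ((d j).factorial : ℝ) ^ ((1:ℝ)/(d j)))^(m+1) := by
      rw [← Finset.prod_pow]
      apply Finset.prod_congr rfl
      intro j _
      rw [← Real.rpow_natCast (((d j).factorial : ℝ) ^ ((1:ℝ)/(d j))) (m+1),
        ← Real.rpow_mul (by positivity)]
      congr 1
      push_cast
      ring
    rw [hRHSeq, ← pow_mul] at main
    have hCnn : (0:ℝ) ≤ ∏ j : α, ((d j).factorial : ℝ) ^ ((1:ℝ)/(d j)) :=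
      Finset.prod_nonneg (fun j _ => Real.rpow_nonneg (by positivity) _)
    exact (pow_le_pow_iff_left₀ (by positivity) hCnn (by positivity)).mp main

/-- Bregman–Minc inequality: if `A` is an `n × n` (0,1)-matrix and `r i ≥ 1`
is the number of 1's in the `i`-th row, then `per A ≤ ∏ i, (r i)! ^ (1 / r i)`. -/
theorem bregman_minc {n : ℕ} (A : Matrix (Fin n) (Fin n) ℝ) (r : Fin n → ℕ)
    (h01 : ∀ i j, A i j = 0 ∨ A i j = 1)
    (hr : ∀ i, r i = (Finset.univ.filter fun j => A i j = 1).card)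
    (hr1 : ∀ i, 1 ≤ r i) :
    A.permanent ≤ ∏ i, ((r i).factorial : ℝ) ^ ((1 : ℝ) / (r i)) := by
  classical
  set M : Fin n → Fin n → Prop := fun i j => A i j = 1 with hM
  haveI : DecidableRel M := fun i j => inferInstanceAs (Decidable (A i j = 1))
  have hperm : A.permanent = ((permSet M).card : ℝ) := by
    rw [Matrix.permanent]
    have h1 : ∑ σ : Equiv.Perm (Fin n), ∏ i, A (σ i) i
        = ∑ σ : Equiv.Perm (Fin n), ∏ i, A i (σ i) := by
      rw [← Equiv.sum_comp (Equiv.inv (Equiv.Perm (Fin n))) (fun σ => ∏ i, A (σ i) i)]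
      apply Finset.sum_congr rfl
      intro σ _
      show ∏ i, A (σ⁻¹ i) i = ∏ i, A i (σ i)
      rw [← Equiv.prod_comp σ (fun i => A (σ⁻¹ i) i)]
      simp
    rw [h1]
    have h2 : ∀ σ : Equiv.Perm (Fin n), ∏ i, A i (σ i)
        = if (∀ i, M i (σ i)) then (1:ℝ) else 0 := by
      intro σ
      by_cases h : ∀ i, M i (σ i)
      · rw [if_pos h]
        exact Finset.prod_eq_one (fun i _ => h i)
      · rw [if_neg h]
        push_neg at h
        obtain ⟨i, hi⟩ := h
        apply Finset.prod_eq_zero (Finset.mem_univ i)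
        rcases h01 i (σ i) with h0 | h1'
        · exact h0
        · exact absurd h1' hi
    rw [Finset.sum_congr rfl (fun σ _ => h2 σ), Finset.sum_boole]
    rw [permSet]
    congr
  have hdeg : ∀ i, deg M i = r i := by
    intro i
    rw [hr i, deg]
    apply Finset.card_nbij id (fun x hx => by simpa using (by simpa using hx))
    · intro x hx y hy h; exact h
    · intro y hy
      simp only [Set.mem_image]
      exact ⟨y, by simpa using (by simpa using hy), rfl⟩
  rw [hperm]
  have := bm_key n (Fin n) M (Fintype.card_fin n)
  refine le_trans this (le_of_eq ?_)
  apply Finset.prod_congr rfl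
  intro i _
  rw [hdeg i]
end

section
/- Let A be an n×n matrix with real entries in the interval [0,1], and suppose that the sum of all entries of A equals γ·n for some real γ ≥ 0 with ⌈γ⌉ + 1 ≤ n. Then per A ≤ (γ+1)^n · e^{-n} · (e·√(γ+1))^{n/(γ+1)}. -/
set_option maxHeartbeats 1000000
open Equiv Finset Matrix
open Equiv Finset Matrix

theorem per_succ_col_zero {R : Type*} [CommRing R] {n : ℕ} (A : Matrix (Fin n.succ) (Fin n.succ) R) :
    A.permanent = ∑ i : Fin n.succ, A i 0 * (A.submatrix i.succAbove Fin.succ).permanent := by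
  rw [Matrix.permanent, Finset.univ_perm_fin_succ, ← Finset.univ_product_univ]
  simp only [Finset.sum_map, Equiv.toEmbedding_apply, Finset.sum_product]
  refine Finset.sum_congr rfl fun i _ => Fin.cases ?_ (fun i => ?_) i
  · simp only [Fin.prod_univ_succ, Matrix.permanent, Finset.mul_sum,
      Equiv.Perm.decomposeFin_symm_apply_zero,
      Equiv.Perm.decomposeFin_symm_apply_succ, Equiv.swap_self, Equiv.coe_refl, id,
      Fin.succAbove_zero, Matrix.submatrix_apply]
  · -- row i.succ
    have key : ∀ σ : Perm (Fin n), ∀ i' : Fin n,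
        A (Equiv.Perm.decomposeFin.symm (i.succ, σ) i'.succ) i'.succ
          = (A.submatrix i.succ.succAbove Fin.succ) (i.cycleRange (σ i')) i' := by
      intro σ i'
      rw [Equiv.Perm.decomposeFin_symm_apply_succ, ← Fin.succAbove_cycleRange,
        Matrix.submatrix_apply]
    calc (∑ σ : Perm (Fin n), ∏ i', A (Equiv.Perm.decomposeFin.symm (i.succ, σ) i') i')
        = ∑ σ : Perm (Fin n), A i.succ 0 *
            ∏ i', ((A.submatrix i.succ.succAbove Fin.succ).submatrix i.cycleRange id)
              (σ i') i' := by
          refine Finset.sum_congr rfl fun σ _ => ?_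
          rw [Fin.prod_univ_succ, Equiv.Perm.decomposeFin_symm_apply_zero]
          congr 1
          refine Finset.prod_congr rfl fun i' _ => ?_
          rw [key σ i']
          rfl
      _ = A i.succ 0 * (A.submatrix i.succ.succAbove Fin.succ).permanent := by
          rw [← Finset.mul_sum]
          congr 1
          exact Matrix.permanent_permute_cols i.cycleRange
            (A.submatrix i.succ.succAbove Fin.succ)

theorem per_succ_row_zero {R : Type*} [CommRing R] {n : ℕ} (A : Matrix (Fin n.succ) (Fin n.succ) R) :
    A.permanent = ∑ j : Fin n.succ, A 0 j * (A.submatrix Fin.succ j.succAbove).permanent := by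
  rw [← Matrix.permanent_transpose A, per_succ_col_zero]
  refine Finset.sum_congr rfl fun j _ => ?_
  rw [← Matrix.permanent_transpose]
  simp only [Matrix.transpose_apply, Matrix.transpose_submatrix, Matrix.transpose_transpose]

theorem per_succ_row {R : Type*} [CommRing R] {n : ℕ} (A : Matrix (Fin n.succ) (Fin n.succ) R)
    (i : Fin n.succ) :
    A.permanent = ∑ j : Fin n.succ, A i j * (A.submatrix i.succAbove j.succAbove).permanent := by
  rw [← Matrix.permanent_permute_cols i.cycleRange⁻¹ A, per_succ_row_zero]
  refine Finset.sum_congr rfl fun j _ => ?_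
  rw [Matrix.submatrix_apply, Matrix.submatrix_submatrix]
  congr 2
  · rw [Equiv.Perm.inv_def, Fin.cycleRange_symm_zero]
  · ext i' j'
    simp only [Matrix.submatrix_apply, Function.comp_apply, id_eq, Equiv.Perm.inv_def,
      Fin.cycleRange_symm_succ]

namespace PermAux

/-- number of ones in row `k` -/
noncomputable def rn {n : ℕ} (B : Matrix (Fin n) (Fin n) ℝ) (k : Fin n) : ℕ :=
  ∑ j, if B k j = 1 then 1 else 0

lemma rn_cast {n : ℕ} (B : Matrix (Fin n) (Fin n) ℝ) (hB : ∀ i j, B i j = 0 ∨ B i j = 1)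
    (k : Fin n) : ((rn B k : ℕ) : ℝ) = ∑ j, B k j := by
  rw [rn]
  push_cast
  refine Finset.sum_congr rfl fun j _ => ?_
  rcases hB k j with h | h <;> simp [h]

lemma permanent_nonneg {n : ℕ} (M : Matrix (Fin n) (Fin n) ℝ) (h : ∀ i j, 0 ≤ M i j) :
    0 ≤ M.permanent :=
  Finset.sum_nonneg fun σ _ => Finset.prod_nonneg fun i _ => h _ _

lemma permanent_zero_row {n : ℕ} (M : Matrix (Fin n) (Fin n) ℝ) (k : Fin n)
    (h : ∀ j, M k j = 0) : M.permanent = 0 := by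
  refine Finset.sum_eq_zero fun σ _ => ?_
  refine Finset.prod_eq_zero (Finset.mem_univ (σ.symm k)) ?_
  rw [Equiv.apply_symm_apply]
  exact h _

lemma rn_pos {n : ℕ} (B : Matrix (Fin n) (Fin n) ℝ) (hB : ∀ i j, B i j = 0 ∨ B i j = 1)
    (k : Fin n) (hp : B.permanent ≠ 0) : 1 ≤ rn B k := by
  by_contra h
  push_neg at h
  interval_cases h' : rn B k
  · apply hp
    refine permanent_zero_row B k fun j => ?_
    rcases hB k j with h0 | h1
    · exact h0
    · exfalso
      have : 1 ≤ rn B k := by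
        rw [rn]
        calc 1 = if B k j = 1 then 1 else 0 := by simp [h1]
        _ ≤ _ := Finset.single_le_sum (f := fun j => if B k j = 1 then (1:ℕ) else 0)
            (fun _ _ => by positivity) (Finset.mem_univ j)
      omega

noncomputable def phi (t : ℕ) : ℝ := Real.log (Nat.factorial t) / (t : ℝ)

lemma phi_nonneg (t : ℕ) : 0 ≤ phi t :=
  div_nonneg (Real.log_nonneg (by exact_mod_cast (Nat.factorial_pos t))) (Nat.cast_nonneg t)

lemma phi_mul (t : ℕ) : phi t * (t : ℝ) = Real.log (Nat.factorial t) := by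
  rcases Nat.eq_zero_or_pos t with h | h
  · simp [h, phi]
  · rw [phi, div_mul_cancel₀]
    positivity

lemma key_alg (m : ℕ) (N : ℝ) (hm : 1 ≤ m) :
    Real.log (m : ℝ) + (phi (m - 1) * ((m : ℝ) - 1) + phi m * (N + 1 - m)) = (N + 1) * phi m := by
  have h1 : ((m - 1 : ℕ) : ℝ) = (m : ℝ) - 1 := by
    push_cast [Nat.cast_sub hm]; ring
  have h2 : phi (m - 1) * ((m : ℝ) - 1) = Real.log (Nat.factorial (m-1) : ℕ) := by rw [← h1, phi_mul]
  have h3 : Real.log (m : ℝ) + Real.log (Nat.factorial (m-1) : ℕ) = Real.log (Nat.factorial m : ℕ) := by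
    rw [← Real.log_mul (by exact_mod_cast (Nat.pos_of_ne_zero (by omega)).ne')
      (by exact_mod_cast (Nat.factorial_pos (m-1)).ne')]
    congr 1
    exact_mod_cast Nat.mul_factorial_pred (by omega : m ≠ 0)
  have h4 : phi m * (m : ℝ) = Real.log (Nat.factorial m : ℕ) := phi_mul m
  have : phi m * (N + 1 - m) = (N + 1) * phi m - Real.log (Nat.factorial m : ℕ) := by
    rw [← h4]; ring
  rw [h2, this]
  linarith [h3]
section Bregman

variable {n : ℕ}

theorem bregman_log : ∀ (n : ℕ) (B : Matrix (Fin n) (Fin n) ℝ),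
    (∀ i j, B i j = 0 ∨ B i j = 1) →
    Real.log B.permanent ≤ ∑ k, phi (rn B k) := by
  intro n
  induction n with
  | zero =>
    intro B _
    simp [Matrix.permanent_isEmpty]
  | succ n IH =>
    intro B hB
    by_cases hp : B.permanent = 0
    · rw [hp, Real.log_zero]
      exact Finset.sum_nonneg fun k _ => phi_nonneg _
    · set p := B.permanent with hpdef
      have hB0 : ∀ i j, 0 ≤ B i j := fun i j => by rcases hB i j with h | h <;> simp [h]
      have hB1 : ∀ i j, B i j ≤ 1 := fun i j => by rcases hB i j with h | h <;> simp [h]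
      have hppos : 0 < p := lt_of_le_of_ne (permanent_nonneg B hB0) (Ne.symm hp)
      have hr : ∀ k, 1 ≤ rn B k := fun k => rn_pos B hB k hp
      have hrR : ∀ k, (0:ℝ) < (rn B k : ℝ) := fun k => by exact_mod_cast hr k
      -- minors
      set q : Fin (n+1) → Fin (n+1) → ℝ :=
        fun i j => (B.submatrix i.succAbove j.succAbove).permanent with hqdef
      have hBm : ∀ (i j : Fin (n+1)) (i' j' : Fin n), (B.submatrix i.succAbove j.succAbove) i' j' = 0 ∨
          (B.submatrix i.succAbove j.succAbove) i' j' = 1 := fun i j i' j' => hB _ _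
      have hq0 : ∀ i j, 0 ≤ q i j := fun i j =>
        permanent_nonneg _ (fun i' j' => hB0 _ _)
      have hexp : ∀ i, p = ∑ j, B i j * q i j := fun i => per_succ_row B i
      -- column-adjusted counts
      set c : Fin (n+1) → Fin (n+1) → ℕ :=
        fun k j => rn B k - (if B k j = 1 then 1 else 0) with hcdef
      -- minor row counts
      have hminor_rn : ∀ (i j : Fin (n+1)) (k' : Fin n),
          rn (B.submatrix i.succAbove j.succAbove) k' = c (i.succAbove k') j := by
        intro i j k'
        have h1 : rn B (i.succAbove k') = (if B (i.succAbove k') j = 1 then 1 else 0)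
            + ∑ j', (if B (i.succAbove k') (j.succAbove j') = 1 then 1 else 0) := by
          rw [rn]
          exact Fin.sum_univ_succAbove (fun j'' => if B (i.succAbove k') j'' = 1 then 1 else 0) j
        have h2 : rn (B.submatrix i.succAbove j.succAbove) k'
            = ∑ j', (if B (i.succAbove k') (j.succAbove j') = 1 then 1 else 0) := by
          rw [rn]; rfl
        rw [h2]
        simp only [hcdef]
        omega
      -- Jensen step
      have step1 : ∀ i, p * Real.log p
          ≤ p * Real.log (rn B i) + ∑ j, B i j * (q i j * Real.log (q i j)) := by
        intro i
        have hw : ∀ j ∈ Finset.univ, 0 ≤ B i j / (rn B i : ℝ) :=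
          fun j _ => div_nonneg (hB0 i j) (hrR i).le
        have hw1 : ∑ j, B i j / (rn B i : ℝ) = 1 := by
          rw [← Finset.sum_div, ← rn_cast B hB i, div_self (hrR i).ne']
        have hmem : ∀ j ∈ Finset.univ, q i j ∈ Set.Ici (0:ℝ) := fun j _ => hq0 i j
        have hJ := Real.convexOn_mul_log.map_sum_le hw hw1 hmem
        have hne : (rn B i : ℝ) ≠ 0 := (hrR i).ne'
        have hsum : ∑ j, (B i j / (rn B i : ℝ)) • q i j = p / (rn B i : ℝ) := by
          rw [hexp i, Finset.sum_div]
          exact Finset.sum_congr rfl fun j _ => by rw [smul_eq_mul]; ring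
        rw [hsum] at hJ
        have hJ' := mul_le_mul_of_nonneg_left hJ (hrR i).le
        have hL : (rn B i : ℝ) * (p / (rn B i : ℝ) * Real.log (p / (rn B i : ℝ)))
            = p * Real.log p - p * Real.log (rn B i) := by
          rw [Real.log_div hppos.ne' hne]
          field_simp
        have hR : (rn B i : ℝ) * ∑ j, (B i j / (rn B i : ℝ)) • (q i j * Real.log (q i j))
            = ∑ j, B i j * (q i j * Real.log (q i j)) := by
          rw [Finset.mul_sum]
          refine Finset.sum_congr rfl fun j _ => ?_
          rw [smul_eq_mul]
          field_simp
        rw [hL, hR] at hJ'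
        linarith
      -- IH step
      have step2 : ∀ i j, q i j * Real.log (q i j)
          ≤ q i j * ((∑ k, phi (c k j)) - phi (c i j)) := by
        intro i j
        have hIH := IH (B.submatrix i.succAbove j.succAbove) (hBm i j)
        have hsum_eq : ∑ k', phi (rn (B.submatrix i.succAbove j.succAbove) k')
            = (∑ k, phi (c k j)) - phi (c i j) := by
          have h1 : ∑ k, phi (c k j) = phi (c i j) + ∑ k', phi (c (i.succAbove k') j) :=
            Fin.sum_univ_succAbove (fun k => phi (c k j)) i
          have h2 : ∑ k', phi (rn (B.submatrix i.succAbove j.succAbove) k')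
              = ∑ k', phi (c (i.succAbove k') j) :=
            Finset.sum_congr rfl fun k' _ => by rw [hminor_rn i j k']
          rw [h2]
          linarith
        rw [← hsum_eq]
        rcases eq_or_lt_of_le (hq0 i j) with h | h
        · rw [← h]; simp
        · exact mul_le_mul_of_nonneg_left hIH h.le
      -- product formula for row-modified matrix
      have hprod : ∀ (i k : Fin (n+1)) (σ : Perm (Fin (n+1))),
          ∏ m, (B.updateRow i (fun j => B i j * B k j)) (σ m) m
            = B k (σ.symm i) * ∏ m, B (σ m) m := by
        intro i k σ
        set m₀ := σ.symm i with hm₀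
        have hσm₀ : σ m₀ = i := Equiv.apply_symm_apply σ i
        rw [← Finset.mul_prod_erase Finset.univ _ (Finset.mem_univ m₀),
            ← Finset.mul_prod_erase Finset.univ (fun m => B (σ m) m) (Finset.mem_univ m₀)]
        have herase : ∀ m ∈ Finset.univ.erase m₀,
            (B.updateRow i fun j => B i j * B k j) (σ m) m = B (σ m) m := by
          intro m hm
          have hne : σ m ≠ i := by
            intro hmi
            exact Finset.ne_of_mem_erase hm (by rw [hm₀, ← hmi, Equiv.symm_apply_apply])
          exact congrFun (Matrix.updateRow_ne hne) m
        rw [Finset.prod_congr rfl herase, hσm₀]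
        have : (B.updateRow i fun j => B i j * B k j) i m₀ = B i m₀ * B k m₀ :=
          congrFun (Matrix.updateRow_self) m₀
        rw [this]
        ring
      -- E1 inner identity
      have hE1inner : ∀ (i k : Fin (n+1)), ∑ j, (B i j * B k j) * q i j
          = ∑ σ : Perm (Fin (n+1)), B k (σ.symm i) * ∏ m, B (σ m) m := by
        intro i k
        have h1 : (B.updateRow i (fun j => B i j * B k j)).permanent
            = ∑ j, (B i j * B k j) * q i j := by
          rw [per_succ_row (B.updateRow i fun j => B i j * B k j) i]
          refine Finset.sum_congr rfl fun j _ => ?_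
          have hv : (B.updateRow i fun j' => B i j' * B k j') i j = B i j * B k j :=
            congrFun (Matrix.updateRow_self) j
          have hmm : (B.updateRow i fun j' => B i j' * B k j').submatrix i.succAbove j.succAbove
              = B.submatrix i.succAbove j.succAbove := by
            ext i' j'
            simp only [Matrix.submatrix_apply]
            exact congrFun (Matrix.updateRow_ne (Fin.succAbove_ne i i')) (j.succAbove j')
          rw [hv, hmm]
        rw [← h1, Matrix.permanent]
        exact Finset.sum_congr rfl fun σ _ => hprod i k σ
      -- E1 full
      have hE1 : ∀ k, ∑ i, ∑ j, (B i j * B k j) * q i j = (rn B k : ℝ) * p := by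
        intro k
        have h1 : ∑ i, ∑ j, (B i j * B k j) * q i j
            = ∑ i, ∑ σ : Perm (Fin (n+1)), B k (σ.symm i) * ∏ m, B (σ m) m :=
          Finset.sum_congr rfl fun i _ => hE1inner i k
        have h2 : ∀ σ : Perm (Fin (n+1)), ∑ i, B k (σ.symm i) = (rn B k : ℝ) := by
          intro σ
          rw [rn_cast B hB k]
          exact Equiv.sum_comp σ.symm (B k)
        rw [h1, Finset.sum_comm]
        calc ∑ σ : Perm (Fin (n+1)), ∑ i, B k (σ.symm i) * ∏ m, B (σ m) m
            = ∑ σ : Perm (Fin (n+1)), (rn B k : ℝ) * ∏ m, B (σ m) m := by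
              refine Finset.sum_congr rfl fun σ _ => ?_
              rw [← Finset.sum_mul, h2 σ]
          _ = (rn B k : ℝ) * p := by rw [← Finset.mul_sum]; rfl
      -- row sums of B*q
      have hrowp : ∀ i, ∑ j, B i j * q i j = p := fun i => (hexp i).symm
      have hallrow : ∑ i : Fin (n+1), ∑ j, B i j * q i j = ((n:ℝ)+1) * p := by
        rw [Finset.sum_congr rfl fun i _ => hrowp i, Finset.sum_const, Finset.card_univ]
        simp
        try ring
      -- split of phi (c k j)
      have hsplit : ∀ (k i j : Fin (n+1)), B i j * (q i j * phi (c k j))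
          = (B i j * B k j) * q i j * phi (rn B k - 1)
            + (B i j * q i j - (B i j * B k j) * q i j) * phi (rn B k) := by
        intro k i j
        rcases hB k j with h | h
        · simp only [hcdef, h]
          norm_num
          ring
        · simp only [hcdef, h]
          norm_num
          ring
      -- diagonal identity
      have hdiag : ∀ i, ∑ j, B i j * (q i j * phi (c i j)) = phi (rn B i - 1) * p := by
        intro i
        have : ∀ j, B i j * (q i j * phi (c i j)) = phi (rn B i - 1) * (B i j * q i j) := by
          intro j
          rcases hB i j with h | h
          · simp [h]
          · simp only [hcdef, h]
            norm_num
            ring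
        rw [Finset.sum_congr rfl fun j _ => this j, ← Finset.mul_sum, hrowp i]
      -- fixed-k full sum
      have hfixedk : ∀ k, ∑ i, ∑ j, B i j * (q i j * phi (c k j))
          = phi (rn B k - 1) * ((rn B k : ℝ) * p)
            + phi (rn B k) * (((n:ℝ)+1) * p - (rn B k : ℝ) * p) := by
        intro k
        have h1 : ∑ i, ∑ j, B i j * (q i j * phi (c k j))
            = (∑ i, ∑ j, (B i j * B k j) * q i j) * phi (rn B k - 1)
              + (∑ i, ∑ j, B i j * q i j - ∑ i, ∑ j, (B i j * B k j) * q i j) * phi (rn B k) := by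
          calc ∑ i, ∑ j, B i j * (q i j * phi (c k j))
              = ∑ i, ∑ j, ((B i j * B k j) * q i j * phi (rn B k - 1)
                + (B i j * q i j - (B i j * B k j) * q i j) * phi (rn B k)) :=
                Finset.sum_congr rfl fun i _ =>
                  Finset.sum_congr rfl fun j _ => hsplit k i j
            _ = _ := by
                simp only [Finset.sum_add_distrib, Finset.sum_sub_distrib, ← Finset.sum_mul]
        rw [h1, hE1 k, hallrow]
        ring
      -- swap sums
      have hswap : ∑ i : Fin (n+1), ∑ j, ∑ k, B i j * (q i j * phi (c k j))
          = ∑ k : Fin (n+1), ∑ i, ∑ j, B i j * (q i j * phi (c k j)) := by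
        have h1 : ∀ i : Fin (n+1), ∑ j, ∑ k, B i j * (q i j * phi (c k j))
            = ∑ k, ∑ j, B i j * (q i j * phi (c k j)) := fun i => Finset.sum_comm
        rw [Finset.sum_congr rfl fun i _ => h1 i, Finset.sum_comm]
      have step2' : ∀ i, ∑ j, B i j * (q i j * Real.log (q i j))
          ≤ ∑ j, B i j * (q i j * ((∑ k, phi (c k j)) - phi (c i j))) :=
        fun i => Finset.sum_le_sum fun j _ =>
          mul_le_mul_of_nonneg_left (step2 i j) (hB0 i j)
      have hexpand : ∀ i, ∑ j, B i j * (q i j * ((∑ k, phi (c k j)) - phi (c i j)))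
          = (∑ j, ∑ k, B i j * (q i j * phi (c k j)))
            - ∑ j, B i j * (q i j * phi (c i j)) := by
        intro i
        rw [← Finset.sum_sub_distrib]
        refine Finset.sum_congr rfl fun j _ => ?_
        simp only [mul_sub, Finset.mul_sum]
      have htot1 : ((n:ℝ)+1) * (p * Real.log p) ≤ p * ∑ i : Fin (n+1), Real.log (rn B i)
          + ((∑ k : Fin (n+1), (phi (rn B k - 1) * ((rn B k : ℝ) * p)
              + phi (rn B k) * (((n:ℝ)+1) * p - (rn B k : ℝ) * p)))
            - ∑ i : Fin (n+1), phi (rn B i - 1) * p) := by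
        calc ((n:ℝ)+1) * (p * Real.log p) = ∑ _i : Fin (n+1), p * Real.log p := by
              rw [Finset.sum_const, Finset.card_univ]
              simp [nsmul_eq_mul]
              try ring
          _ ≤ ∑ i, (p * Real.log (rn B i) + ∑ j, B i j * (q i j * Real.log (q i j))) :=
              Finset.sum_le_sum fun i _ => step1 i
          _ ≤ ∑ i, (p * Real.log (rn B i) + ((∑ j, ∑ k, B i j * (q i j * phi (c k j)))
                - ∑ j, B i j * (q i j * phi (c i j)))) := by
              refine Finset.sum_le_sum fun i _ => add_le_add (le_refl _) ?_
              rw [← hexpand i]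
              exact step2' i
          _ = (∑ i, p * Real.log (rn B i)) + ((∑ i, ∑ j, ∑ k, B i j * (q i j * phi (c k j)))
                - ∑ i, ∑ j, B i j * (q i j * phi (c i j))) := by
              rw [Finset.sum_add_distrib, Finset.sum_sub_distrib]
          _ = p * ∑ i, Real.log (rn B i) + ((∑ k, ∑ i, ∑ j, B i j * (q i j * phi (c k j)))
                - ∑ i, phi (rn B i - 1) * p) := by
              rw [hswap, Finset.mul_sum, Finset.sum_congr rfl fun i _ => hdiag i]
          _ = _ := by rw [Finset.sum_congr rfl fun k _ => hfixedk k]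
      have hcomb : p * ∑ i : Fin (n+1), Real.log (rn B i)
          + ((∑ k : Fin (n+1), (phi (rn B k - 1) * ((rn B k : ℝ) * p)
              + phi (rn B k) * (((n:ℝ)+1) * p - (rn B k : ℝ) * p)))
            - ∑ i : Fin (n+1), phi (rn B i - 1) * p)
          = ((n:ℝ)+1) * (p * ∑ k, phi (rn B k)) := by
        have hterm : ∀ k : Fin (n+1), p * Real.log (rn B k)
            + (phi (rn B k - 1) * ((rn B k : ℝ) * p)
              + phi (rn B k) * (((n:ℝ)+1) * p - (rn B k : ℝ) * p)
              - phi (rn B k - 1) * p)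
            = ((n:ℝ)+1) * (p * phi (rn B k)) := by
          intro k
          have halg : p * Real.log (rn B k)
              + (phi (rn B k - 1) * ((rn B k : ℝ) * p)
                + phi (rn B k) * (((n:ℝ)+1) * p - (rn B k : ℝ) * p)
                - phi (rn B k - 1) * p)
              = p * (Real.log (rn B k) + (phi (rn B k - 1) * ((rn B k : ℝ) - 1)
                + phi (rn B k) * ((n:ℝ) + 1 - (rn B k : ℝ)))) := by ring
          rw [halg, key_alg (rn B k) (n:ℝ) (hr k)]
          ring
        calc p * ∑ i : Fin (n+1), Real.log (rn B i)
            + ((∑ k : Fin (n+1), (phi (rn B k - 1) * ((rn B k : ℝ) * p)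
                + phi (rn B k) * (((n:ℝ)+1) * p - (rn B k : ℝ) * p)))
              - ∑ i : Fin (n+1), phi (rn B i - 1) * p)
            = ∑ k : Fin (n+1), (p * Real.log (rn B k)
              + (phi (rn B k - 1) * ((rn B k : ℝ) * p)
                + phi (rn B k) * (((n:ℝ)+1) * p - (rn B k : ℝ) * p)
                - phi (rn B k - 1) * p)) := by
              simp only [Finset.sum_add_distrib, Finset.sum_sub_distrib, Finset.mul_sum]
          _ = ∑ k : Fin (n+1), ((n:ℝ)+1) * (p * phi (rn B k)) :=
              Finset.sum_congr rfl fun k _ => hterm k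
          _ = ((n:ℝ)+1) * (p * ∑ k, phi (rn B k)) := by
              rw [← Finset.mul_sum, ← Finset.mul_sum]
      rw [hcomb] at htot1
      have hN : (0:ℝ) < (n:ℝ)+1 := by positivity
      have h2 : p * Real.log p ≤ p * ∑ k, phi (rn B k) := by
        have := (mul_le_mul_iff_right₀ hN).mp htot1
        linarith
      exact (mul_le_mul_iff_right₀ hppos).mp h2

end Bregman

noncomputable def Gf (s : ℝ) : ℝ := Real.log s - 1 + (1 + Real.log s / 2) / s
noncomputable def Gf' (s : ℝ) : ℝ := (2*s - 1 - Real.log s) / (2*s^2)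
noncomputable def Gf'' (s : ℝ) : ℝ := (Real.log s + 1/2 - s) / s^3

lemma hasDerivAt_Gf {s : ℝ} (hs : 0 < s) : HasDerivAt Gf (Gf' s) s := by
  have hlog : HasDerivAt Real.log s⁻¹ s := Real.hasDerivAt_log hs.ne'
  have h1 : HasDerivAt (fun s => 1 + Real.log s / 2) (s⁻¹ / 2) s :=
    (hlog.div_const 2).const_add 1
  have h3 : HasDerivAt (fun s => (1 + Real.log s / 2) / s)
      ((s⁻¹/2 * s - (1 + Real.log s / 2) * 1)/s^2) s := h1.div (hasDerivAt_id s) hs.ne'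
  have h4 : HasDerivAt (fun s => Real.log s - 1) s⁻¹ s := hlog.sub_const 1
  have h5 := h4.add h3
  refine h5.congr_deriv ?_
  rw [Gf']
  field_simp
  ring

lemma hasDerivAt_Gf' {s : ℝ} (hs : 0 < s) : HasDerivAt Gf' (Gf'' s) s := by
  have hlog : HasDerivAt Real.log s⁻¹ s := Real.hasDerivAt_log hs.ne'
  have h1 : HasDerivAt (fun s : ℝ => 2*s - 1 - Real.log s) (2 - s⁻¹) s := by
    have := ((hasDerivAt_id s).const_mul 2).sub_const 1
    have h' := this.sub hlog
    simp at h'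
    exact h'.congr_deriv (by ring)
  have h2 : HasDerivAt (fun s : ℝ => 2*s^2) (2*(2*s)) s := by
    simpa using ((hasDerivAt_pow 2 s).const_mul 2)
  have h3 := h1.div h2 (by positivity)
  refine h3.congr_deriv ?_
  rw [Gf'']
  field_simp
  ring

lemma log_le_sub_one {s : ℝ} (hs : 0 < s) : Real.log s ≤ s - 1 :=
  Real.log_le_sub_one_of_pos hs

lemma Gf'_nonneg {s : ℝ} (hs : 1 ≤ s) : 0 ≤ Gf' s := by
  have h0 : (0:ℝ) < s := lt_of_lt_of_le one_pos hs
  have h1 : Real.log s ≤ s - 1 := log_le_sub_one h0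
  have : 0 ≤ 2*s - 1 - Real.log s := by linarith
  exact div_nonneg this (by positivity)

lemma Gf_mono : MonotoneOn Gf (Set.Ici (1:ℝ)) := by
  refine monotoneOn_of_deriv_nonneg (convex_Ici 1) ?_ ?_ ?_
  · intro x hx
    have hx1 : (1:ℝ) ≤ x := hx
    exact ((hasDerivAt_Gf (by linarith)).continuousAt).continuousWithinAt
  · intro x hx
    rw [interior_Ici] at hx
    exact (hasDerivAt_Gf (by linarith [Set.mem_Ioi.mp hx])).differentiableAt.differentiableWithinAt
  · intro x hx
    rw [interior_Ici] at hx
    have hx1 : (1:ℝ) < x := hx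
    rw [(hasDerivAt_Gf (by linarith)).deriv]
    exact Gf'_nonneg hx1.le

lemma key2 {s : ℝ} (hs : 1 ≤ s) : (1 + Real.log s)^2 ≤ 2*s := by
  set F : ℝ → ℝ := fun t => 2*t - (1 + Real.log t)^2 with hFdef
  have hF : ∀ x : ℝ, 0 < x → HasDerivAt F (2 - 2*(1 + Real.log x) * x⁻¹) x := by
    intro x hx
    have hlog : HasDerivAt Real.log x⁻¹ x := Real.hasDerivAt_log hx.ne'
    have h1 : HasDerivAt (fun t : ℝ => (1 + Real.log t)^2) (2*(1 + Real.log x) * x⁻¹) x := by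
      have := (hlog.const_add 1).pow 2
      simp at this
      exact this.congr_deriv (by ring)
    have h' := ((hasDerivAt_id x).const_mul 2).sub h1
    simp at h'
    exact h'.congr_deriv (by ring)
  have hmono : MonotoneOn F (Set.Ici (1:ℝ)) := by
    refine monotoneOn_of_deriv_nonneg (convex_Ici 1) ?_ ?_ ?_
    · intro t ht
      have : (1:ℝ) ≤ t := ht
      exact (hF t (by linarith)).continuousAt.continuousWithinAt
    · intro t ht
      rw [interior_Ici] at ht
      exact (hF t (by linarith [Set.mem_Ioi.mp ht])).differentiableAt.differentiableWithinAt
    · intro t ht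
      rw [interior_Ici] at ht
      have ht1 : (1:ℝ) < t := ht
      rw [(hF t (by linarith)).deriv]
      have hlt : Real.log t ≤ t - 1 := log_le_sub_one (by linarith)
      have : 2*(1 + Real.log t) * t⁻¹ ≤ 2 := by
        rw [mul_inv_le_iff₀ (by linarith : (0:ℝ) < t)]
        nlinarith
      linarith
  have h1 := hmono (Set.self_mem_Ici) (Set.mem_Ici.mpr hs) hs
  have hF1 : F 1 = 1 := by simp [hFdef]; norm_num
  rw [hF1] at h1
  have : F s = 2*s - (1 + Real.log s)^2 := rfl
  linarith [h1, this.symm.le]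

noncomputable def hfun (x : ℝ) : ℝ := Real.exp (Gf (x + 1))

lemma hfun_pos (x : ℝ) : 0 < hfun x := Real.exp_pos _

lemma hasDerivAt_Gshift {x : ℝ} (hx : -1 < x) :
    HasDerivAt (fun x : ℝ => Gf (x + 1)) (Gf' (x + 1)) x := by
  have h1 : HasDerivAt (fun x : ℝ => x + 1) 1 x := (hasDerivAt_id x).add_const 1
  have := (hasDerivAt_Gf (show 0 < x + 1 by linarith)).comp x h1
  simp at this
  exact this.congr_deriv (by ring)

lemma hasDerivAt_hfun {x : ℝ} (hx : -1 < x) :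
    HasDerivAt hfun (Real.exp (Gf (x + 1)) * Gf' (x + 1)) x :=
  (hasDerivAt_Gshift hx).exp

lemma hasDerivAt_hfun' {x : ℝ} (hx : -1 < x) :
    HasDerivAt (fun x : ℝ => Real.exp (Gf (x + 1)) * Gf' (x + 1))
      (Real.exp (Gf (x + 1)) * (Gf' (x + 1)^2 + Gf'' (x + 1))) x := by
  have h1 : HasDerivAt (fun x : ℝ => Gf' (x + 1)) (Gf'' (x + 1)) x := by
    have := (hasDerivAt_Gf' (show 0 < x + 1 by linarith)).comp x ((hasDerivAt_id x).add_const 1)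
    simp at this
    exact this.congr_deriv (by ring)
  have := (hasDerivAt_hfun hx).mul h1
  refine this.congr_deriv ?_
  simp only [hfun]
  ring

lemma Gf2_sum_nonpos {s : ℝ} (hs : 1 ≤ s) : Gf' s ^ 2 + Gf'' s ≤ 0 := by
  have h0 : (0:ℝ) < s := lt_of_lt_of_le one_pos hs
  have heq : Gf' s ^ 2 + Gf'' s = ((1 + Real.log s)^2 - 2*s) / (4*s^4) := by
    rw [Gf', Gf'']
    field_simp
    ring
  rw [heq]
  apply div_nonpos_of_nonpos_of_nonneg
  · linarith [key2 hs]
  · positivity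

lemma hfun_concave : ConcaveOn ℝ (Set.Ici (0:ℝ)) hfun := by
  have hd : ∀ x ∈ Set.Ioi (-1:ℝ), deriv hfun x = Real.exp (Gf (x + 1)) * Gf' (x + 1) :=
    fun x hx => (hasDerivAt_hfun hx).deriv
  have hd2 : ∀ x ∈ Set.Ioi (0:ℝ), HasDerivAt (deriv hfun)
      (Real.exp (Gf (x + 1)) * (Gf' (x + 1)^2 + Gf'' (x + 1))) x := by
    intro x hx
    have hx0 : (0:ℝ) < x := hx
    refine (hasDerivAt_hfun' (by linarith)).congr_of_eventuallyEq ?_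
    filter_upwards [Ioi_mem_nhds (show (-1:ℝ) < x by linarith)] with y hy
    exact hd y hy
  refine concaveOn_of_deriv2_nonpos (convex_Ici 0) ?_ ?_ ?_ ?_
  · intro x hx
    have : (0:ℝ) ≤ x := hx
    exact (hasDerivAt_hfun (by linarith)).continuousAt.continuousWithinAt
  · intro x hx
    rw [interior_Ici] at hx
    have : (0:ℝ) < x := hx
    exact (hasDerivAt_hfun (by linarith)).differentiableAt.differentiableWithinAt
  · intro x hx
    rw [interior_Ici] at hx
    exact (hd2 x hx).differentiableAt.differentiableWithinAt
  · intro x hx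
    rw [interior_Ici] at hx
    have hx0 : (0:ℝ) < x := hx
    have : deriv (deriv hfun) x = Real.exp (Gf (x + 1)) * (Gf' (x + 1)^2 + Gf'' (x + 1)) :=
      (hd2 x hx).deriv
    simp only [Function.iterate_succ, Function.iterate_zero, Function.comp_apply, id_eq]
    rw [this]
    exact mul_nonpos_of_nonneg_of_nonpos (Real.exp_pos _).le (Gf2_sum_nonpos (by linarith))

lemma Gshift_concave : ConcaveOn ℝ (Set.Ici (0:ℝ)) (fun x : ℝ => Gf (x + 1)) := by
  have hd : ∀ x ∈ Set.Ioi (-1:ℝ), deriv (fun x : ℝ => Gf (x + 1)) x = Gf' (x + 1) :=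
    fun x hx => (hasDerivAt_Gshift hx).deriv
  have hd2 : ∀ x ∈ Set.Ioi (0:ℝ), HasDerivAt (deriv (fun x : ℝ => Gf (x + 1)))
      (Gf'' (x + 1)) x := by
    intro x hx
    have hx0 : (0:ℝ) < x := hx
    have h1 : HasDerivAt (fun x : ℝ => Gf' (x + 1)) (Gf'' (x + 1)) x := by
      have := (hasDerivAt_Gf' (show 0 < x + 1 by linarith)).comp x ((hasDerivAt_id x).add_const 1)
      simp at this
      exact this.congr_deriv (by ring)
    refine h1.congr_of_eventuallyEq ?_
    filter_upwards [Ioi_mem_nhds (show (-1:ℝ) < x by linarith)] with y hy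
    exact hd y hy
  refine concaveOn_of_deriv2_nonpos (convex_Ici 0) ?_ ?_ ?_ ?_
  · intro x hx
    have : (0:ℝ) ≤ x := hx
    exact (hasDerivAt_Gshift (by linarith)).continuousAt.continuousWithinAt
  · intro x hx
    rw [interior_Ici] at hx
    have : (0:ℝ) < x := hx
    exact (hasDerivAt_Gshift (by linarith)).differentiableAt.differentiableWithinAt
  · intro x hx
    rw [interior_Ici] at hx
    exact (hd2 x hx).differentiableAt.differentiableWithinAt
  · intro x hx
    rw [interior_Ici] at hx
    have hx0 : (0:ℝ) < x := hx
    simp only [Function.iterate_succ, Function.iterate_zero, Function.comp_apply, id_eq]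
    rw [(hd2 x hx).deriv, Gf'']
    apply div_nonpos_of_nonpos_of_nonneg
    · have : Real.log (x+1) ≤ (x+1) - 1 := log_le_sub_one (by linarith)
      linarith
    · positivity

lemma log_factorial_le (k : ℕ) (hk : 1 ≤ k) :
    Real.log (Nat.factorial k) ≤ (k:ℝ) * Gf k := by
  have hk0 : (0:ℝ) < (k:ℝ) := by exact_mod_cast hk
  obtain ⟨m, rfl⟩ : ∃ m, k = m + 1 := ⟨k - 1, by omega⟩
  have hanti := Stirling.log_stirlingSeq'_antitone (show 0 ≤ m by omega)
  -- log (stirlingSeq (m+1)) ≤ log (stirlingSeq 1)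
  have h1 : Real.log (Stirling.stirlingSeq (m+1)) ≤ Real.log (Stirling.stirlingSeq 1) := hanti
  have hform := Stirling.log_stirlingSeq_formula (m+1)
  have hs1 : Real.log (Stirling.stirlingSeq 1) = 1 - Real.log 2 / 2 := by
    rw [Stirling.stirlingSeq_one, Real.log_div (Real.exp_pos 1).ne' (by positivity),
      Real.log_exp, Real.log_sqrt (by norm_num)]
  rw [hs1] at h1
  rw [hform] at h1
  -- h1 : log (m+1)! - 1/2 log (2(m+1)) - (m+1) log ((m+1)/e) ≤ 1 - log 2 / 2
  have hk1 : (0:ℝ) < ((m+1 : ℕ):ℝ) := hk0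
  have hlog2 : Real.log (2 * ((m+1:ℕ):ℝ)) = Real.log 2 + Real.log ((m+1:ℕ):ℝ) :=
    Real.log_mul (by norm_num) hk1.ne'
  have hlogdiv : Real.log (((m+1:ℕ):ℝ) / Real.exp 1) = Real.log ((m+1:ℕ):ℝ) - 1 := by
    rw [Real.log_div hk1.ne' (Real.exp_pos 1).ne', Real.log_exp]
  rw [Gf]
  have hG : ((m+1:ℕ):ℝ) * (Real.log ((m+1:ℕ):ℝ) - 1
      + (1 + Real.log ((m+1:ℕ):ℝ) / 2) / ((m+1:ℕ):ℝ))
      = ((m+1:ℕ):ℝ) * (Real.log ((m+1:ℕ):ℝ) - 1) + 1 + Real.log ((m+1:ℕ):ℝ) / 2 := by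
    field_simp
    ring
  push_cast at h1 hlog2 hlogdiv hG ⊢
  rw [hlog2, hlogdiv] at h1
  linarith

lemma phi_le_G (k : ℕ) (hk : 1 ≤ k) : phi k ≤ Gf ((k:ℝ) + 1) := by
  have hk0 : (0:ℝ) < (k:ℝ) := by exact_mod_cast hk
  have h1 : phi k ≤ Gf k := by
    rw [phi, div_le_iff₀ hk0, mul_comm]
    exact log_factorial_le k hk
  refine h1.trans (Gf_mono (Set.mem_Ici.mpr (by exact_mod_cast hk))
    (Set.mem_Ici.mpr (by linarith)) (by linarith))

section Expect

variable {n : ℕ} (A : Matrix (Fin n) (Fin n) ℝ)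

noncomputable def wr (i : Fin n) (v : Fin n → Bool) : ℝ :=
  ∏ j, (if v j then A i j else 1 - A i j)

def cntB {n : ℕ} (v : Fin n → Bool) : ℕ := ∑ j, if v j then 1 else 0

noncomputable def MB {n : ℕ} (B : Fin n → Fin n → Bool) : Matrix (Fin n) (Fin n) ℝ :=
  Matrix.of fun i j => if B i j then (1:ℝ) else 0

lemma wr_nonneg (hA0 : ∀ i j, 0 ≤ A i j) (hA1 : ∀ i j, A i j ≤ 1) (i : Fin n)
    (v : Fin n → Bool) : 0 ≤ wr A i v := by
  rw [wr]
  refine Finset.prod_nonneg fun j _ => ?_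
  by_cases h : v j <;> simp [h]
  · exact hA0 i j
  · linarith [hA1 i j]

lemma row_indicator (i : Fin n) (j₀ : Fin n) :
    ∑ v : Fin n → Bool, wr A i v * (if v j₀ then (1:ℝ) else 0) = A i j₀ := by
  have h1 : ∀ v : Fin n → Bool, wr A i v * (if v j₀ then (1:ℝ) else 0)
      = ∏ j, ((if v j then A i j else 1 - A i j)
          * (if j = j₀ then (if v j then (1:ℝ) else 0) else 1)) := by
    intro v
    rw [Finset.prod_mul_distrib, wr]
    congr 1
    simp
  rw [Finset.sum_congr rfl fun v _ => h1 v]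
  have h2 : (∏ j, ∑ b : Bool, ((if b then A i j else 1 - A i j)
        * (if j = j₀ then (if b then (1:ℝ) else 0) else 1)))
      = ∑ v : Fin n → Bool, ∏ j, ((if v j then A i j else 1 - A i j)
          * (if j = j₀ then (if v j then (1:ℝ) else 0) else 1)) := by
    rw [Finset.prod_univ_sum, Fintype.piFinset_univ]
  rw [← h2]
  have h3 : ∀ j, (∑ b : Bool, ((if b then A i j else 1 - A i j)
      * (if j = j₀ then (if b then (1:ℝ) else 0) else 1))) = (if j = j₀ then A i j else 1) := by
    intro j
    by_cases h : j = j₀ <;> simp [h] <;> ring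
  rw [Finset.prod_congr rfl fun j _ => h3 j]
  simp

lemma row_one (i : Fin n) : ∑ v : Fin n → Bool, wr A i v = 1 := by
  have h2 : (∏ j, ∑ b : Bool, (if b then A i j else 1 - A i j))
      = ∑ v : Fin n → Bool, ∏ j, (if v j then A i j else 1 - A i j) := by
    rw [Finset.prod_univ_sum, Fintype.piFinset_univ]
  simp only [wr]
  rw [← h2]
  have h3 : ∀ j, (∑ b : Bool, (if b then A i j else 1 - A i j)) = 1 := by
    intro j; simp
  rw [Finset.prod_congr rfl fun j _ => h3 j]
  simp

lemma row_cnt (i : Fin n) :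
    ∑ v : Fin n → Bool, wr A i v * (cntB v : ℝ) = ∑ j, A i j := by
  have h1 : ∀ v : Fin n → Bool, wr A i v * (cntB v : ℝ)
      = ∑ j₀, wr A i v * (if v j₀ then (1:ℝ) else 0) := by
    intro v
    rw [← Finset.mul_sum]
    congr 1
    rw [cntB]
    push_cast
    refine Finset.sum_congr rfl fun j _ => ?_
    by_cases h : v j <;> simp [h]
  rw [Finset.sum_congr rfl fun v _ => h1 v, Finset.sum_comm]
  exact Finset.sum_congr rfl fun j₀ _ => row_indicator A i j₀

lemma rn_MB (B : Fin n → Fin n → Bool) (i : Fin n) : rn (MB B) i = cntB (B i) := by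
  rw [rn, cntB]
  refine Finset.sum_congr rfl fun j _ => ?_
  by_cases h : B i j <;> simp [MB, h]

lemma MB01 (B : Fin n → Fin n → Bool) : ∀ i j, MB B i j = 0 ∨ MB B i j = 1 :=
  fun i j => by by_cases h : B i j <;> simp [MB, h]

lemma expand : A.permanent
    = ∑ B : Fin n → Fin n → Bool, (∏ i, wr A i (B i)) * (MB B).permanent := by
  symm
  calc (∑ B : Fin n → Fin n → Bool, (∏ i, wr A i (B i)) * (MB B).permanent)
      = ∑ B : Fin n → Fin n → Bool, ∑ σ : Equiv.Perm (Fin n),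
          (∏ i, wr A i (B i)) * ∏ j, (MB B) (σ j) j := by
        refine Finset.sum_congr rfl fun B _ => ?_
        rw [Matrix.permanent, Finset.mul_sum]
    _ = ∑ σ : Equiv.Perm (Fin n), ∑ B : Fin n → Fin n → Bool,
          (∏ i, wr A i (B i)) * ∏ j, (MB B) (σ j) j := Finset.sum_comm
    _ = ∑ σ : Equiv.Perm (Fin n), ∏ j, A (σ j) j := by
        refine Finset.sum_congr rfl fun σ _ => ?_
        have hstep1 : ∀ B : Fin n → Fin n → Bool,
            (∏ j, (MB B) (σ j) j) = ∏ i, (if B i (σ.symm i) then (1:ℝ) else 0) := by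
          intro B
          rw [← Equiv.prod_comp σ (fun i => if B i (σ.symm i) then (1:ℝ) else 0)]
          refine Finset.prod_congr rfl fun j _ => ?_
          simp [MB, Equiv.symm_apply_apply]
        have hstep2 : ∀ B : Fin n → Fin n → Bool,
            (∏ i, wr A i (B i)) * ∏ i, (if B i (σ.symm i) then (1:ℝ) else 0)
            = ∏ i, (wr A i (B i) * (if B i (σ.symm i) then (1:ℝ) else 0)) := by
          intro B
          rw [Finset.prod_mul_distrib]
        have h2 : (∏ i, ∑ v : Fin n → Bool, wr A i v * (if v (σ.symm i) then (1:ℝ) else 0))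
            = ∑ B : Fin n → Fin n → Bool,
              ∏ i, (wr A i (B i) * (if (B i) (σ.symm i) then (1:ℝ) else 0)) := by
          rw [Finset.prod_univ_sum, Fintype.piFinset_univ]
        calc (∑ B : Fin n → Fin n → Bool, (∏ i, wr A i (B i)) * ∏ j, (MB B) (σ j) j)
            = ∑ B : Fin n → Fin n → Bool,
              ∏ i, (wr A i (B i) * (if (B i) (σ.symm i) then (1:ℝ) else 0)) := by
              refine Finset.sum_congr rfl fun B _ => ?_
              rw [hstep1 B, hstep2 B]
          _ = ∏ i, ∑ v : Fin n → Bool, wr A i v * (if v (σ.symm i) then (1:ℝ) else 0) :=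
              h2.symm
          _ = ∏ i, A i (σ.symm i) :=
              Finset.prod_congr rfl fun i _ => row_indicator A i (σ.symm i)
          _ = ∏ j, A (σ j) j := by
              rw [← Equiv.prod_comp σ (fun i => A i (σ.symm i))]
              exact Finset.prod_congr rfl fun j _ => by rw [Equiv.symm_apply_apply]
    _ = A.permanent := rfl

lemma perMB_le (B : Fin n → Fin n → Bool) :
    (MB B).permanent ≤ ∏ i, hfun ((cntB (B i) : ℝ)) := by
  have hMB01 := MB01 B
  have hnn : ∀ i j, 0 ≤ MB B i j := fun i j => by rcases hMB01 i j with h|h <;> simp [h]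
  by_cases hz : (MB B).permanent = 0
  · rw [hz]
    exact (Finset.prod_pos fun i _ => hfun_pos _).le
  · have hpos : 0 < (MB B).permanent :=
      lt_of_le_of_ne (permanent_nonneg _ hnn) (Ne.symm hz)
    have hlog := bregman_log n (MB B) hMB01
    have h2 : ∑ k, phi (rn (MB B) k) ≤ ∑ k, Gf ((cntB (B k) : ℝ) + 1) := by
      refine Finset.sum_le_sum fun k _ => ?_
      have hk1 : 1 ≤ rn (MB B) k := rn_pos (MB B) hMB01 k hz
      rw [rn_MB] at hk1 ⊢
      exact phi_le_G _ hk1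
    calc (MB B).permanent = Real.exp (Real.log (MB B).permanent) := (Real.exp_log hpos).symm
      _ ≤ Real.exp (∑ k, Gf ((cntB (B k) : ℝ) + 1)) := Real.exp_le_exp.mpr (hlog.trans h2)
      _ = ∏ i, hfun ((cntB (B i) : ℝ)) := by
          rw [Real.exp_sum]
          rfl

end Expect

end PermAux

open PermAux

/-- if `A` is an `n × n` matrix with entries in `[0,1]` whose entries sum to
`γ * n` with `γ ≥ 0` and `⌈γ⌉ + 1 ≤ n`, then
`per A ≤ (γ+1)^n * e^(-n) * (e * √(γ+1))^(n/(γ+1))`. -/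
theorem permanent_le_of_total_sum {n : ℕ} (A : Matrix (Fin n) (Fin n) ℝ) (γ : ℝ)
    (hA0 : ∀ i j, 0 ≤ A i j) (hA1 : ∀ i j, A i j ≤ 1)
    (hγ : 0 ≤ γ) (hγn : ⌈γ⌉₊ + 1 ≤ n)
    (hsum : ∑ i, ∑ j, A i j = γ * n) :
    A.permanent ≤ (γ + 1) ^ n * Real.exp (-(n : ℝ)) *
      (Real.exp 1 * Real.sqrt (γ + 1)) ^ ((n : ℝ) / (γ + 1)) := by
  have hn : 1 ≤ n := le_trans (Nat.le_add_left 1 _) hγn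
  have hnR : (0:ℝ) < (n:ℝ) := by exact_mod_cast hn
  have hm : (0:ℝ) < γ + 1 := by linarith
  set ρ : Fin n → ℝ := fun i => ∑ j, A i j with hρdef
  have hρ0 : ∀ i, 0 ≤ ρ i := fun i => Finset.sum_nonneg fun j _ => hA0 i j
  have h1 : A.permanent ≤ ∑ B : Fin n → Fin n → Bool,
      (∏ i, wr A i (B i)) * ∏ i, hfun ((cntB (B i) : ℝ)) := by
    rw [expand A]
    refine Finset.sum_le_sum fun B _ => ?_
    exact mul_le_mul_of_nonneg_left (perMB_le B)
      (Finset.prod_nonneg fun i _ => wr_nonneg A hA0 hA1 i (B i))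
  have h2 : ∑ B : Fin n → Fin n → Bool, (∏ i, wr A i (B i)) * ∏ i, hfun ((cntB (B i) : ℝ))
      = ∏ i, ∑ v : Fin n → Bool, wr A i v * hfun ((cntB v : ℝ)) := by
    rw [Finset.prod_univ_sum, Fintype.piFinset_univ]
    refine Finset.sum_congr rfl fun B _ => ?_
    rw [← Finset.prod_mul_distrib]
  have h3 : ∀ i, ∑ v : Fin n → Bool, wr A i v * hfun ((cntB v : ℝ)) ≤ hfun (ρ i) := by
    intro i
    have hw : ∀ v ∈ (Finset.univ : Finset (Fin n → Bool)), 0 ≤ wr A i v :=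
      fun v _ => wr_nonneg A hA0 hA1 i v
    have hw1 : ∑ v : Fin n → Bool, wr A i v = 1 := row_one A i
    have hmem : ∀ v ∈ (Finset.univ : Finset (Fin n → Bool)),
        ((cntB v : ℝ)) ∈ Set.Ici (0:ℝ) := fun v _ => Set.mem_Ici.mpr (Nat.cast_nonneg _)
    have hJ := hfun_concave.le_map_sum hw hw1 hmem
    have hc : ∑ v : Fin n → Bool, wr A i v • ((cntB v : ℝ)) = ρ i := by
      simpa [smul_eq_mul] using row_cnt A i
    rw [hc] at hJ
    simpa [smul_eq_mul] using hJ
  have h4 : A.permanent ≤ ∏ i, hfun (ρ i) := by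
    refine (h1.trans_eq h2).trans
      (Finset.prod_le_prod (fun i _ => ?_) (fun i _ => h3 i))
    exact Finset.sum_nonneg fun v _ =>
      mul_nonneg (wr_nonneg A hA0 hA1 i v) (hfun_pos _).le
  have h5 : ∑ i, Gf (ρ i + 1) ≤ (n:ℝ) * Gf (γ + 1) := by
    have hw : ∀ i ∈ (Finset.univ : Finset (Fin n)), (0:ℝ) ≤ 1 / (n:ℝ) :=
      fun i _ => by positivity
    have hw1 : ∑ _i : Fin n, 1 / (n:ℝ) = 1 := by
      rw [Finset.sum_const, Finset.card_univ, Fintype.card_fin, nsmul_eq_mul]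
      field_simp
    have hJ := Gshift_concave.le_map_sum hw hw1 (fun i _ => Set.mem_Ici.mpr (hρ0 i))
    have hc : ∑ i, (1 / (n:ℝ)) • ρ i = γ := by
      simp only [smul_eq_mul]
      rw [← Finset.mul_sum]
      have : ∑ i, ρ i = γ * n := hsum
      rw [this]
      field_simp
    rw [hc] at hJ
    have : ∑ i, (1 / (n:ℝ)) • Gf (ρ i + 1) = (1 / (n:ℝ)) * ∑ i, Gf (ρ i + 1) := by
      simp only [smul_eq_mul]
      rw [Finset.mul_sum]
    rw [this] at hJ
    calc ∑ i, Gf (ρ i + 1) = (n:ℝ) * ((1 / (n:ℝ)) * ∑ i, Gf (ρ i + 1)) := by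
          field_simp
      _ ≤ (n:ℝ) * Gf (γ + 1) := mul_le_mul_of_nonneg_left hJ hnR.le
  have h6 : ∏ i, hfun (ρ i) = Real.exp (∑ i, Gf (ρ i + 1)) := by
    rw [Real.exp_sum]
    rfl
  have h7 : A.permanent ≤ Real.exp ((n:ℝ) * Gf (γ + 1)) :=
    (h4.trans_eq h6).trans (Real.exp_le_exp.mpr h5)
  have h8 : Real.exp ((n:ℝ) * Gf (γ + 1)) = (γ + 1) ^ n * Real.exp (-(n : ℝ)) *
      (Real.exp 1 * Real.sqrt (γ + 1)) ^ ((n : ℝ) / (γ + 1)) := by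
    have hsq : (0:ℝ) < Real.exp 1 * Real.sqrt (γ + 1) :=
      mul_pos (Real.exp_pos 1) (Real.sqrt_pos.mpr hm)
    have hlogm : Real.log (Real.exp 1 * Real.sqrt (γ + 1)) = 1 + Real.log (γ + 1) / 2 := by
      rw [Real.log_mul (Real.exp_pos 1).ne' (Real.sqrt_pos.mpr hm).ne',
        Real.log_exp, Real.log_sqrt hm.le]
    have hpow : (γ + 1) ^ n = Real.exp ((n:ℝ) * Real.log (γ + 1)) := by
      rw [← Real.exp_log hm]
      rw [← Real.exp_nat_mul]
      rw [Real.exp_log hm]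
    rw [Real.rpow_def_of_pos hsq, hlogm, hpow, ← Real.exp_add, ← Real.exp_add, Gf]
    congr 1
    field_simp
    ring
  rw [← h8]
  exact h7
end

section
/- Let A be a 3-dimensional (0,1)-matrix of order n. For i, j ∈ {1,…,n}, let l_{i,j} denote the 1-dimensional plane {a_{i,j,k} : k = 1,…,n}. Suppose that for each i the number of indices j such that l_{i,j} contains at least one 1 is at most m_i with 1 ≤ m_i, and that every plane l_{i,j} contains at most s_i ones with 1 ≤ s_i. Then per A ≤ ∏_{i=1}^n (m_i!)^{1/m_i} · (s_i!)^{1/s_i}. -/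
section BregmanAux

open Finset

noncomputable def bF (r : ℕ) : ℝ := Real.log (r.factorial) / r

lemma bF_nonneg (r : ℕ) : 0 ≤ bF r :=
  div_nonneg (Real.log_nonneg (by exact_mod_cast r.factorial_pos)) (Nat.cast_nonneg r)

lemma mul_bF (r : ℕ) : (r : ℝ) * bF r = Real.log (r.factorial) := by
  rcases Nat.eq_zero_or_pos r with h | h
  · simp [h, bF]
  · rw [bF, mul_div_cancel₀]
    positivity
lemma bF_mono {r t : ℕ} (hr : 1 ≤ r) (hrt : r ≤ t) : bF r ≤ bF t := by
  induction t, hrt using Nat.le_induction with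
  | base => exact le_refl _
  | succ k hk ih =>
    refine le_trans ih ?_
    have hk1 : 1 ≤ k := le_trans hr hk
    rw [bF, bF, div_le_div_iff₀ (by exact_mod_cast hk1) (by positivity)]
    have hnat : k.factorial ^ (k+1) ≤ (k+1).factorial ^ k := by
      calc k.factorial ^ (k+1) = k.factorial ^ k * k.factorial := by ring
        _ ≤ k.factorial ^ k * (k+1) ^ k := by
            exact Nat.mul_le_mul_left _ (le_trans k.factorial_le_pow
              (Nat.pow_le_pow_left (Nat.le_succ k) k))
        _ = (k.factorial * (k+1)) ^ k := by rw [mul_pow]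
        _ = (k+1).factorial ^ k := by rw [Nat.factorial_succ, Nat.mul_comm]
    have := Real.log_le_log (by positivity) (show ((k.factorial ^ (k+1) : ℕ) : ℝ) ≤ ((k+1).factorial ^ k : ℕ) by exact_mod_cast hnat)
    rw [Nat.cast_pow, Nat.cast_pow, Real.log_pow, Real.log_pow] at this
    have h2 : ((k+1 : ℕ) : ℝ) * Real.log k.factorial ≤ ((k : ℕ) : ℝ) * Real.log (k+1).factorial := this
    push_cast at h2 ⊢
    nlinarith [h2]

lemma jensen_step {β : Type*} [DecidableEq β] (t : Finset β) (w : β → ℝ)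
    (hw : ∀ b ∈ t, 0 ≤ w b) (ht : t.Nonempty) :
    (∑ b ∈ t, w b) * Real.log (∑ b ∈ t, w b) ≤
      (∑ b ∈ t, w b) * Real.log t.card + ∑ b ∈ t, w b * Real.log (w b) := by
  set S := ∑ b ∈ t, w b with hS
  have hS0 : 0 ≤ S := Finset.sum_nonneg hw
  have hr0 : (0:ℝ) < t.card := by exact_mod_cast Finset.card_pos.2 ht
  rcases eq_or_lt_of_le hS0 with h0 | hSpos
  · have hall : ∀ b ∈ t, w b = 0 := by
      intro b hb
      exact (Finset.sum_eq_zero_iff_of_nonneg hw).1 h0.symm b hb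
    rw [← h0]
    simp only [zero_mul, zero_add]
    apply Finset.sum_nonneg
    intro b hb; rw [hall b hb]; simp
  · have hjen := Real.convexOn_mul_log.map_sum_le (t := t)
      (w := fun _ => 1 / (t.card : ℝ)) (p := w)
      (fun b _ => by positivity)
      (by rw [Finset.sum_const, nsmul_eq_mul]; field_simp)
      (fun b hb => Set.mem_Ici.2 (hw b hb))
    have hmean : ∑ b ∈ t, (1 / (t.card : ℝ)) • w b = S / t.card := by
      simp only [smul_eq_mul, ← Finset.mul_sum, ← hS]
      ring
    rw [hmean] at hjen
    have hlog : S / (t.card:ℝ) * Real.log (S / t.card)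
        ≤ ∑ b ∈ t, 1 / (t.card:ℝ) * (w b * Real.log (w b)) := by
      simpa [smul_eq_mul] using hjen
    have := mul_le_mul_of_nonneg_left hlog (le_of_lt hr0)
    rw [Finset.mul_sum] at this
    have hL : (t.card:ℝ) * (S / t.card * Real.log (S / t.card)) = S * (Real.log S - Real.log t.card) := by
      rw [Real.log_div (ne_of_gt hSpos) (ne_of_gt hr0)]
      field_simp
    have hR : ∑ b ∈ t, (t.card:ℝ) * (1 / (t.card:ℝ) * (w b * Real.log (w b)))
        = ∑ b ∈ t, w b * Real.log (w b) := by
      apply Finset.sum_congr rfl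
      intro b _; field_simp
    rw [hL, hR] at this
    nlinarith [this]

section
variable {α β : Type} [Fintype α] [DecidableEq α] [Fintype β] [DecidableEq β]

def bS (R : α → β → Bool) : Finset (α ≃ β) := Finset.univ.filter fun e => ∀ a, R a (e a)
def bcount (R : α → β → Bool) : ℕ := (bS R).card

lemma mem_bS {R : α → β → Bool} {e : α ≃ β} : e ∈ bS R ↔ ∀ a, R a (e a) := by
  simp [bS]
def brow (R : α → β → Bool) (a : α) : Finset β := Finset.univ.filter fun b => R a b
def rsum (R : α → β → Bool) (a : α) : ℕ := (brow R a).card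
def bminor (R : α → β → Bool) (i : α) (k : β) : {a // a ≠ i} → {b // b ≠ k} → Bool :=
  fun a b => R a.1 b.1

lemma fiber_le_minor (R : α → β → Bool) (i : α) (k : β) :
    ((bS R).filter fun e => e i = k).card ≤ bcount (bminor R i k) := by
  classical
  have hiff : ∀ (e : α ≃ β) (a : α), a ≠ i ↔ (e.trans (Equiv.swap (e i) k)) a ≠ k := by
    intro e a
    have h : (e.trans (Equiv.swap (e i) k)) i = k := by simp
    constructor
    · intro ha hek
      exact ha ((e.trans (Equiv.swap (e i) k)).injective (hek.trans h.symm))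
    · intro hh ha; exact hh (ha ▸ h)
  apply Finset.card_le_card_of_injOn
    (fun e => Equiv.subtypeEquiv (e.trans (Equiv.swap (e i) k)) (hiff e))
  · intro e he
    simp only [bS, Finset.mem_coe, mem_filter, mem_univ, true_and] at he ⊢
    obtain ⟨h1, h2⟩ := he
    intro a
    have h3 : R a.1 ((Equiv.swap (e i) k) (e a.1)) = true := by
      rw [h2, Equiv.swap_self]; simpa using h1 a.1
    simpa [bminor, Equiv.subtypeEquiv] using h3
  · intro e he e' he' heq
    simp only [bS, mem_filter, mem_univ, true_and, coe_filter, Set.mem_setOf_eq] at he he'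
    ext a
    rcases eq_or_ne a i with rfl | ha
    · rw [he.2, he'.2]
    · have h0 := congrFun (congrArg (fun q => q.toFun) heq) ⟨a, ha⟩
      have h1 := congrArg Subtype.val h0
      simpa [Equiv.subtypeEquiv, he.2, he'.2, Equiv.swap_self] using h1

lemma rsum_bminor (R : α → β → Bool) (i : α) (k : β) (j : {a // a ≠ i}) :
    rsum (bminor R i k) j = rsum R j.1 - (if R j.1 k then 1 else 0) := by
  classical
  have h1 : (Finset.univ.filter fun b : {b // b ≠ k} => (bminor R i k) j b)
      = ((brow R j.1).erase k).subtype (· ≠ k) := by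
    ext b
    simp [bminor, brow, Finset.mem_erase, b.2, and_comm]
    exact Finset.mem_filter.trans (and_iff_right (Finset.mem_univ _))
  have h2 : rsum (bminor R i k) j = ((brow R j.1).erase k).card := by
    rw [rsum, brow, h1, Finset.card_subtype, Finset.filter_eq_self.2]
    intro b hb
    exact (Finset.mem_erase.1 hb).1
  rw [h2]
  by_cases hk : R j.1 k
  · rw [Finset.card_erase_of_mem (by simp [brow, hk]), if_pos hk]; rfl
  · rw [Finset.erase_eq_of_notMem (by simp [brow, hk]), if_neg hk]; rfl



theorem bregman_log : ∀ (n : ℕ) (α β : Type) [Fintype α] [DecidableEq α] [Fintype β]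
    [DecidableEq β], Fintype.card α = n → ∀ R : α → β → Bool,
    Real.log (bcount R) ≤ ∑ a, bF (rsum R a) := by
  intro n
  induction n using Nat.strong_induction_on with
  | _ n IH =>
  intro α β _ _ _ _ hcard R
  have hFnn : (0:ℝ) ≤ ∑ a, bF (rsum R a) := Finset.sum_nonneg fun a _ => bF_nonneg _
  rcases Nat.eq_zero_or_pos (bcount R) with hp0 | hp
  · rw [hp0]; simpa using hFnn
  rcases Nat.eq_zero_or_pos n with rfl | hn
  · -- α is empty
    have hemp : IsEmpty α := Fintype.card_eq_zero_iff.1 hcard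
    have hss : Subsingleton (α ≃ β) := ⟨fun e e' => Equiv.ext fun a => isEmptyElim a⟩
    have h1 : bcount R ≤ 1 := by
      calc bcount R ≤ Fintype.card (α ≃ β) := by
            rw [← Finset.card_univ]; exact Finset.card_le_univ _
        _ ≤ 1 := Fintype.card_le_one_iff_subsingleton.2 hss
    refine le_trans (Real.log_nonpos (by positivity) (by exact_mod_cast h1)) hFnn
  -- main case
  obtain ⟨e₀, he₀⟩ : (bS R).Nonempty := Finset.card_pos.1 hp
  have he₀' : ∀ a, R a (e₀ a) := by
    simpa [bS] using he₀
  have hcardβ : Fintype.card β = n := by rw [← hcard]; exact (Fintype.card_congr e₀).symm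
  set p := bcount R with hpdef
  set r : α → ℕ := fun a => rsum R a with hrdef
  set tc : α → β → ℕ := fun i k => ((bS R).filter fun e => e i = k).card with htcdef
  have hrow_mem : ∀ e ∈ bS R, ∀ i, e i ∈ brow R i := by
    intro e he i
    simp only [bS, mem_filter, mem_univ, true_and] at he
    simp [brow, he i]
  have hpart : ∀ i, ∑ k ∈ brow R i, tc i k = p :=
    fun i => (Finset.card_eq_sum_card_fiberwise (fun e he => hrow_mem e he i)).symm
  have hfiber : ∀ (i : α) (g : β → ℝ),
      ∑ e ∈ bS R, g (e i) = ∑ k ∈ brow R i, (tc i k : ℝ) * g k := by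
    intro i g
    rw [← Finset.sum_fiberwise_of_maps_to (fun e he => hrow_mem e he i) (fun e => g (e i))]
    refine Finset.sum_congr rfl fun k _ => ?_
    rw [Finset.sum_congr rfl (fun e he => ?_), Finset.sum_const, nsmul_eq_mul]
    exact congrArg g (Finset.mem_filter.1 he).2
  set Bf : α → β → ℝ := fun i k => ∑ j : {a // a ≠ i}, bF (rsum (bminor R i k) j) with hBfdef
  have hBfnn : ∀ i k, 0 ≤ Bf i k := fun i k => Finset.sum_nonneg fun j _ => bF_nonneg _
  have hr1 : ∀ i, 1 ≤ r i := by
    intro i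
    exact Finset.card_pos.2 ⟨e₀ i, hrow_mem e₀ he₀ i⟩
  -- Step: per-row inequality
  have stepi : ∀ i : α, (p:ℝ) * Real.log p ≤
      (p:ℝ) * Real.log (r i) + ∑ e ∈ bS R, Bf i (e i) := by
    intro i
    have hsw : ∑ k ∈ brow R i, (tc i k : ℝ) = (p:ℝ) := by
      rw [← Nat.cast_sum, hpart i]
    have hA := jensen_step (brow R i) (fun k => (tc i k : ℝ))
      (fun k _ => Nat.cast_nonneg _) ⟨e₀ i, hrow_mem e₀ he₀ i⟩
    rw [hsw] at hA
    have hB : ∑ k ∈ brow R i, (tc i k : ℝ) * Real.log (tc i k)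
        ≤ ∑ k ∈ brow R i, (tc i k : ℝ) * Bf i k := by
      refine Finset.sum_le_sum fun k _ => ?_
      refine mul_le_mul_of_nonneg_left ?_ (Nat.cast_nonneg _)
      rcases Nat.eq_zero_or_pos (tc i k) with h0 | hpos
      · rw [h0]; simpa using hBfnn i k
      refine le_trans (Real.log_le_log (by exact_mod_cast hpos)
        (Nat.cast_le.2 (fiber_le_minor R i k))) ?_
      have hcard' : Fintype.card {a // a ≠ i} = n - 1 := by
        rw [Fintype.card_subtype_compl, hcard, Fintype.card_subtype_eq]
      exact IH (n-1) (by omega) _ _ hcard' (bminor R i k)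
    calc (p:ℝ) * Real.log p ≤ (p:ℝ) * Real.log (r i)
          + ∑ k ∈ brow R i, (tc i k : ℝ) * Real.log (tc i k) := hA
      _ ≤ (p:ℝ) * Real.log (r i) + ∑ k ∈ brow R i, (tc i k : ℝ) * Bf i k := by linarith
      _ = (p:ℝ) * Real.log (r i) + ∑ e ∈ bS R, Bf i (e i) := by rw [hfiber i (Bf i)]
  -- sum over i
  have hsumA : (n:ℝ) * ((p:ℝ) * Real.log p) ≤
      (p:ℝ) * (∑ i, Real.log (r i)) + ∑ e ∈ bS R, ∑ i, Bf i (e i) := by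
    have := Finset.sum_le_sum (fun i (_ : i ∈ (univ : Finset α)) => stepi i)
    rw [Finset.sum_const, Finset.card_univ, hcard, nsmul_eq_mul] at this
    rw [Finset.sum_comm (s := bS R) (t := univ) (f := fun e i => Bf i (e i))]
    calc (n:ℝ) * ((p:ℝ) * Real.log p)
        ≤ ∑ i, ((p:ℝ) * Real.log (r i) + ∑ e ∈ bS R, Bf i (e i)) := this
      _ = (p:ℝ) * (∑ i, Real.log (r i)) + ∑ i, ∑ e ∈ bS R, Bf i (e i) := by
          rw [Finset.sum_add_distrib, Finset.mul_sum]
  -- Step E: evaluate the inner sum for each e in bS R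
  have hrn : ∀ j : α, r j ≤ n := by
    intro j
    calc r j ≤ Fintype.card β := by
          rw [← Finset.card_univ]; exact Finset.card_le_univ _
      _ = n := hcardβ
  have stepE : ∀ e ∈ bS R, ∑ i, Bf i (e i) =
      ∑ j, (Real.log ((r j - 1).factorial) + ((n:ℝ) - (r j : ℝ)) * bF (r j)) := by
    intro e he
    have heR : ∀ a, R a (e a) := by simpa [bS] using he
    have h1 : ∀ i : α, Bf i (e i) =
        ∑ j ∈ univ.erase i, bF (r j - if R j (e i) then 1 else 0) := by
      intro i
      calc Bf i (e i)
          = ∑ j : {a // a ≠ i}, bF (r j.1 - if R j.1 (e i) then 1 else 0) :=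
            Finset.sum_congr rfl fun j _ => by rw [rsum_bminor R i (e i) j]
        _ = ∑ j ∈ univ.erase i, bF (r j - if R j (e i) then 1 else 0) :=
            (Finset.sum_subtype (univ.erase i) (fun x => by simp [Finset.mem_erase])
              (fun j => bF (r j - if R j (e i) then 1 else 0))).symm
    have h2 : ∑ i, Bf i (e i)
        = ∑ j, ∑ i ∈ univ.erase j, bF (r j - if R j (e i) then 1 else 0) := by
      rw [Finset.sum_congr rfl fun i _ => h1 i]
      exact Finset.sum_comm' fun x y => by
        simp [Finset.mem_erase, ne_comm, eq_comm]
    rw [h2]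
    refine Finset.sum_congr rfl fun j _ => ?_
    -- reindex i ↦ e i
    have himg : (univ.erase j).image (⇑e) = univ.erase (e j) := by
      ext b
      simp only [Finset.mem_image, Finset.mem_erase, Finset.mem_univ, and_true, true_and]
      constructor
      · rintro ⟨i, hij, rfl⟩
        exact fun h => hij (e.injective h)
      · intro hb
        exact ⟨e.symm b, fun h => hb (by rw [← h, e.apply_symm_apply]),
          e.apply_symm_apply b⟩
    have h3 : ∑ i ∈ univ.erase j, bF (r j - if R j (e i) then 1 else 0)
        = ∑ b ∈ univ.erase (e j), bF (r j - if R j b then 1 else 0) := by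
      rw [← himg, Finset.sum_image (fun x _ y _ h => e.injective h)]
    rw [h3]
    -- split sum per predicate R j
    have hsplit := Finset.sum_filter_add_sum_filter_not (univ.erase (e j))
      (fun b => R j b = true) (fun b => bF (r j - if R j b then 1 else 0))
    rw [← hsplit]
    have hc1 : ((univ.erase (e j)).filter fun b => R j b = true) = (brow R j).erase (e j) := by
      ext b
      simp [brow, Finset.mem_erase, and_comm]
    have hcard1 : ((univ.erase (e j)).filter fun b => R j b = true).card = r j - 1 := by
      rw [hc1, Finset.card_erase_of_mem (hrow_mem e he j)]
      rfl
    have hcard0 : ((univ.erase (e j)).filter fun b => ¬ (R j b = true)).card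
        = (n - 1) - (r j - 1) := by
      have htot := Finset.card_filter_add_card_filter_not
        (s := univ.erase (e j)) (p := fun b => R j b = true)
      rw [hcard1] at htot
      have : (univ.erase (e j)).card = n - 1 := by
        rw [Finset.card_erase_of_mem (Finset.mem_univ _), Finset.card_univ, hcardβ]
      omega
    have hval1 : ∑ b ∈ (univ.erase (e j)).filter (fun b => R j b = true),
        bF (r j - if R j b then 1 else 0) = Real.log ((r j - 1).factorial) := by
      have hcg : ∀ b ∈ (univ.erase (e j)).filter (fun b => R j b = true),
          bF (r j - if R j b then 1 else 0) = bF (r j - 1) := fun b hb => by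
        rw [if_pos (Finset.mem_filter.1 hb).2]
      rw [Finset.sum_congr rfl hcg, Finset.sum_const, hcard1, nsmul_eq_mul, mul_bF]
    have hval0 : ∑ b ∈ (univ.erase (e j)).filter (fun b => ¬ (R j b = true)),
        bF (r j - if R j b then 1 else 0) = ((n:ℝ) - (r j : ℝ)) * bF (r j) := by
      have hcg : ∀ b ∈ (univ.erase (e j)).filter (fun b => ¬ (R j b = true)),
          bF (r j - if R j b then 1 else 0) = bF (r j) := fun b hb => by
        rw [if_neg (Finset.mem_filter.1 hb).2, Nat.sub_zero]
      rw [Finset.sum_congr rfl hcg, Finset.sum_const, hcard0, nsmul_eq_mul]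
      congr 1
      have h11 : (1:ℕ) ≤ r j := hr1 j
      have h2n : r j ≤ n := hrn j
      have hh : ((n - 1) - (r j - 1) : ℕ) = (n - r j : ℕ) := by omega
      rw [hh, Nat.cast_sub h2n]
    rw [hval1, hval0]
  -- assemble everything
  have hSsum : ∑ e ∈ bS R, ∑ i, Bf i (e i)
      = (p:ℝ) * ∑ j, (Real.log ((r j - 1).factorial) + ((n:ℝ) - (r j:ℝ)) * bF (r j)) := by
    rw [Finset.sum_congr rfl stepE, Finset.sum_const, nsmul_eq_mul]
    rfl
  have hbracket : ∀ j : α, Real.log (r j)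
      + (Real.log ((r j - 1).factorial) + ((n:ℝ) - (r j:ℝ)) * bF (r j))
      = (n:ℝ) * bF (r j) := by
    intro j
    have hrpos : (0:ℝ) < (r j : ℝ) := by exact_mod_cast hr1 j
    have h1 : Real.log (r j) + Real.log ((r j - 1).factorial)
        = Real.log ((r j).factorial) := by
      rw [← Real.log_mul (ne_of_gt hrpos)
        (by exact_mod_cast (Nat.cast_pos.2 (r j - 1).factorial_pos).ne')]
      congr 1
      rw [← Nat.cast_mul, Nat.mul_factorial_pred (by have := hr1 j; omega)]
    have h2 : Real.log ((r j).factorial) = (r j : ℝ) * bF (r j) := (mul_bF _).symm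
    rw [← add_assoc, h1, h2]; ring
  have hfinal : (n:ℝ) * ((p:ℝ) * Real.log p) ≤ (n:ℝ) * ((p:ℝ) * ∑ j, bF (r j)) := by
    calc (n:ℝ) * ((p:ℝ) * Real.log p)
        ≤ (p:ℝ) * (∑ i, Real.log (r i)) + ∑ e ∈ bS R, ∑ i, Bf i (e i) := hsumA
      _ = (p:ℝ) * ∑ j, (Real.log (r j)
            + (Real.log ((r j - 1).factorial) + ((n:ℝ) - (r j:ℝ)) * bF (r j))) := by
          rw [hSsum, ← mul_add, ← Finset.sum_add_distrib]
      _ = (p:ℝ) * ∑ j, (n:ℝ) * bF (r j) := by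
          rw [Finset.sum_congr rfl fun j _ => hbracket j]
      _ = (n:ℝ) * ((p:ℝ) * ∑ j, bF (r j)) := by
          rw [← Finset.mul_sum]; ring
  have hnpos : (0:ℝ) < (n:ℝ) := by exact_mod_cast hn
  have hppos : (0:ℝ) < (p:ℝ) := by exact_mod_cast hp
  have h1 := le_of_mul_le_mul_left hfinal hnpos
  exact le_of_mul_le_mul_left h1 hppos

lemma bcount_le_of_rowbound {α β : Type} [Fintype α] [DecidableEq α] [Fintype β] [DecidableEq β]
    (R : α → β → Bool) (s : α → ℕ) (hs1 : ∀ a, 1 ≤ s a) (hrs : ∀ a, rsum R a ≤ s a) :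
    (bcount R : ℝ) ≤ ∏ a, ((s a).factorial : ℝ) ^ ((1:ℝ)/(s a)) := by
  have hlog : Real.log (bcount R) ≤ ∑ a, bF (s a) := by
    refine le_trans (bregman_log (Fintype.card α) α β rfl R)
      (Finset.sum_le_sum fun a _ => ?_)
    rcases Nat.eq_zero_or_pos (rsum R a) with h0 | hpos
    · rw [h0]
      simpa [bF] using bF_nonneg (s a)
    · exact bF_mono hpos (le_trans (hrs a) (le_refl _)) |>.trans
        (bF_mono (le_trans hpos (hrs a)) (le_refl _))
  have hprod : ∏ a, ((s a).factorial : ℝ) ^ ((1:ℝ)/(s a)) = Real.exp (∑ a, bF (s a)) := by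
    rw [Real.exp_sum]
    refine Finset.prod_congr rfl fun a _ => ?_
    rw [Real.rpow_def_of_pos (by exact_mod_cast (s a).factorial_pos), bF]
    congr 1
    ring
  rcases Nat.eq_zero_or_pos (bcount R) with h0 | hpos
  · rw [h0, hprod, Nat.cast_zero]
    exact (Real.exp_pos _).le
  · rw [hprod, ← Real.exp_log (show (0:ℝ) < (bcount R : ℝ) by exact_mod_cast hpos)]
    exact Real.exp_le_exp.2 hlog

end

end BregmanAux

/-- The permanent of a 3-dimensional matrix `A` of order `n`:
`per A = ∑ ∏_i a_{i, σ(i), π(i)}` over all pairs of permutations `(σ, π)`. -/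
noncomputable def perm3 {n : ℕ} (A : Fin n → Fin n → Fin n → ℝ) : ℝ :=
  ∑ σ : Equiv.Perm (Fin n), ∑ π : Equiv.Perm (Fin n), ∏ i, A i (σ i) (π i)

/-- let `A` be a 3-dimensional (0,1)-matrix of order `n`; if for each `i` at most
`m i ≥ 1` of the lines `l_{i,j} = (a_{i,j,1}, …, a_{i,j,n})` contain a 1, and every line
`l_{i,j}` contains at most `s i ≥ 1` ones, then
`per A ≤ ∏ i, (m i)!^(1/m i) * (s i)!^(1/s i)`. -/
theorem perm3_le_prod (n : ℕ) (A : Fin n → Fin n → Fin n → ℝ) (m s : Fin n → ℕ)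
    (h01 : ∀ i j k, A i j k = 0 ∨ A i j k = 1)
    (hm1 : ∀ i, 1 ≤ m i) (hs1 : ∀ i, 1 ≤ s i)
    (hm : ∀ i, (Finset.univ.filter fun j => ∃ k, A i j k = 1).card ≤ m i)
    (hs : ∀ i j, (Finset.univ.filter fun k => A i j k = 1).card ≤ s i) :
    perm3 A ≤ ∏ i, ((m i).factorial : ℝ) ^ ((1 : ℝ) / (m i)) *
      ((s i).factorial : ℝ) ^ ((1 : ℝ) / (s i)) := by
  classical
  set R2 : Equiv.Perm (Fin n) → Fin n → Fin n → Bool :=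
    fun σ i k => decide (A i (σ i) k = 1) with hR2
  set RJ : Fin n → Fin n → Bool := fun i j => decide (∃ k, A i j k = 1) with hRJ
  set Sprod : ℝ := ∏ i, ((s i).factorial : ℝ) ^ ((1:ℝ)/(s i)) with hSprod
  set Mprod : ℝ := ∏ i, ((m i).factorial : ℝ) ^ ((1:ℝ)/(m i)) with hMprod
  have hSnn : 0 ≤ Sprod := Finset.prod_nonneg fun i _ => Real.rpow_nonneg (by positivity) _
  -- inner sum is a bcount
  have hterm : ∀ (σ π : Equiv.Perm (Fin n)),
      ∏ i, A i (σ i) (π i) = if (∀ i, R2 σ i (π i)) then (1:ℝ) else 0 := by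
    intro σ π
    by_cases h : ∀ i, R2 σ i (π i)
    · rw [if_pos h]
      refine Finset.prod_eq_one fun i _ => ?_
      have := h i
      rwa [hR2, decide_eq_true_iff] at this
    · rw [if_neg h]
      push_neg at h
      obtain ⟨i, hi⟩ := h
      refine Finset.prod_eq_zero (Finset.mem_univ i) ?_
      rcases h01 i (σ i) (π i) with h0 | h1
      · exact h0
      · exact absurd (by rw [hR2]; simpa using h1) hi
  have hinner : ∀ σ : Equiv.Perm (Fin n),
      ∑ π : Equiv.Perm (Fin n), ∏ i, A i (σ i) (π i) = (bcount (R2 σ) : ℝ) := by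
    intro σ
    rw [Finset.sum_congr rfl fun π _ => hterm σ π, Finset.sum_boole]
    congr 1
    apply Finset.card_bij (fun e _ => e)
    · intro e he
      rw [mem_bS]
      exact (Finset.mem_filter.1 he).2
    · intro e _ e' _ h
      exact h
    · intro e he
      exact ⟨e, Finset.mem_filter.2 ⟨Finset.mem_univ _, mem_bS.1 he⟩, rfl⟩
  -- bound for each σ
  have hrowR2 : ∀ σ i, rsum (R2 σ) i ≤ s i := by
    intro σ i
    refine le_trans (le_of_eq ?_) (hs i (σ i))
    rw [rsum, brow]
    congr 1
    ext k
    simp [hR2]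
  have hJ : ∀ σ : Equiv.Perm (Fin n), (¬ ∀ i, RJ i (σ i)) → bcount (R2 σ) = 0 := by
    intro σ h
    push_neg at h
    obtain ⟨i, hi⟩ := h
    rw [bcount, Finset.card_eq_zero, Finset.eq_empty_iff_forall_notMem]
    intro e he
    have h1 := (mem_bS.1 he) i
    rw [hR2, decide_eq_true_iff] at h1
    have hi' : ¬ (∃ k, A i (σ i) k = 1) := by
      intro hex
      exact hi (by rw [hRJ]; exact decide_eq_true hex)
    exact hi' ⟨e i, h1⟩
  have hstep : ∀ σ : Equiv.Perm (Fin n), (bcount (R2 σ) : ℝ) ≤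
      (if ∀ i, RJ i (σ i) then (1:ℝ) else 0) * Sprod := by
    intro σ
    by_cases h : ∀ i, RJ i (σ i)
    · rw [if_pos h, one_mul]
      exact bcount_le_of_rowbound (R2 σ) s hs1 (hrowR2 σ)
    · rw [if_neg h, zero_mul, hJ σ h, Nat.cast_zero]
  -- count of admissible σ
  have hcnt : ∑ σ : Equiv.Perm (Fin n), (if ∀ i, RJ i (σ i) then (1:ℝ) else 0)
      = (bcount RJ : ℝ) := by
    rw [Finset.sum_boole]
    congr 1
    apply Finset.card_bij (fun e _ => e)
    · intro e he
      rw [mem_bS]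
      exact (Finset.mem_filter.1 he).2
    · intro e _ e' _ h
      exact h
    · intro e he
      exact ⟨e, Finset.mem_filter.2 ⟨Finset.mem_univ _, mem_bS.1 he⟩, rfl⟩
  have hJbound : (bcount RJ : ℝ) ≤ Mprod := by
    refine bcount_le_of_rowbound RJ m hm1 fun i => le_trans (le_of_eq ?_) (hm i)
    rw [rsum, brow]
    congr 1
    ext j
    simp [hRJ]
  calc perm3 A = ∑ σ : Equiv.Perm (Fin n), (bcount (R2 σ) : ℝ) :=
        Finset.sum_congr rfl fun σ _ => hinner σ
    _ ≤ ∑ σ : Equiv.Perm (Fin n), (if ∀ i, RJ i (σ i) then (1:ℝ) else 0) * Sprod :=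
        Finset.sum_le_sum fun σ _ => hstep σ
    _ = (bcount RJ : ℝ) * Sprod := by rw [← Finset.sum_mul, hcnt]
    _ ≤ Mprod * Sprod := mul_le_mul_of_nonneg_right hJbound hSnn
    _ = ∏ i, ((m i).factorial : ℝ) ^ ((1 : ℝ) / (m i)) *
        ((s i).factorial : ℝ) ^ ((1 : ℝ) / (s i)) := by
      rw [hMprod, hSprod, ← Finset.prod_mul_distrib]
end

section
/- The function g(x) = e^{1/x} · x^{1 + 1/(2x)} · e^{-1} is concave on the interval (1, ∞). -/
open Real Set

noncomputable def h0aux (x : ℝ) : ℝ := 1 / x + (1 + (1/2) * (1/x)) * Real.log x - 1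
noncomputable def h1aux (x : ℝ) : ℝ := 1 / x - (1 + Real.log x) * ((1/2) * (x^2)⁻¹)
noncomputable def h2aux (x : ℝ) : ℝ :=
  -(1 / x ^ 2) - 1 / (2 * x ^ 3) + (1 + Real.log x) / x ^ 3

lemma h0aux_deriv {x : ℝ} (hx : 0 < x) : HasDerivAt h0aux (h1aux x) x := by
  have hx0 : x ≠ 0 := ne_of_gt hx
  have d1 : HasDerivAt (fun y : ℝ => 1 / y) (-(x^2)⁻¹) x := by
    simpa [one_div] using (hasDerivAt_inv hx0)
  have dlog : HasDerivAt Real.log x⁻¹ x := Real.hasDerivAt_log hx0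
  have dinner : HasDerivAt (fun y : ℝ => 1 + (1/2) * (1/y)) ((1/2) * (-(x^2)⁻¹)) x :=
    (d1.const_mul (1/2)).const_add 1
  have dmul : HasDerivAt (fun y : ℝ => (1 + (1/2) * (1/y)) * Real.log y)
      ((1/2) * (-(x^2)⁻¹) * Real.log x + (1 + (1/2) * (1/x)) * x⁻¹) x := dinner.mul dlog
  have := (d1.add dmul).sub_const 1
  refine this.congr_deriv ?_
  unfold h1aux
  field_simp
  ring

lemma h1aux_deriv {x : ℝ} (hx : 0 < x) : HasDerivAt h1aux (h2aux x) x := by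
  have hx0 : x ≠ 0 := ne_of_gt hx
  have d1 : HasDerivAt (fun y : ℝ => 1 / y) (-(x^2)⁻¹) x := by
    simpa [one_div] using (hasDerivAt_inv hx0)
  have dlog : HasDerivAt Real.log x⁻¹ x := Real.hasDerivAt_log hx0
  have dsq : HasDerivAt (fun y : ℝ => (y^2)⁻¹) (-((2:ℕ) * x ^ 1) / (x^2)^2) x :=
    (hasDerivAt_pow 2 x).inv (pow_ne_zero 2 hx0)
  have dprod : HasDerivAt (fun y : ℝ => (1 + Real.log y) * ((1/2) * (y^2)⁻¹))
      (x⁻¹ * ((1/2) * (x^2)⁻¹) + (1 + Real.log x) * ((1/2) * (-((2:ℕ) * x ^ 1) / (x^2)^2))) x :=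
    (dlog.const_add 1).mul (dsq.const_mul (1/2))
  have := d1.sub dprod
  refine this.congr_deriv ?_
  unfold h2aux
  push_cast
  field_simp
  ring

lemma key_ineq {x : ℝ} (hx : 1 < x) : (1 + Real.log x) ^ 2 ≤ 2 * x := by
  have hl : 0 ≤ Real.log x := Real.log_nonneg hx.le
  have h := Real.quadratic_le_exp_of_nonneg hl
  rw [Real.exp_log (by linarith : (0:ℝ) < x)] at h
  nlinarith [sq_nonneg (Real.log x)]

lemma second_nonpos {x : ℝ} (hx : 1 < x) :
    Real.exp (h0aux x) * h1aux x * h1aux x + Real.exp (h0aux x) * h2aux x ≤ 0 := by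
  have hx0 : (0:ℝ) < x := lt_trans one_pos hx
  have hid : h1aux x * h1aux x + h2aux x
      = ((1 + Real.log x) ^ 2 - 2 * x) / (4 * x ^ 4) := by
    unfold h1aux h2aux
    field_simp
    ring
  have hnum : (1 + Real.log x) ^ 2 - 2 * x ≤ 0 := by linarith [key_ineq hx]
  have hsum : h1aux x * h1aux x + h2aux x ≤ 0 := by
    rw [hid]
    exact div_nonpos_iff.mpr (Or.inr ⟨hnum, by positivity⟩)
  have hexp : 0 < Real.exp (h0aux x) := Real.exp_pos _
  nlinarith [mul_nonpos_of_nonneg_of_nonpos hexp.le hsum]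

/-- the function `g(x) = e^(1/x) * x^(1 + 1/(2x)) * e^(-1)` is concave on the
interval `(1, ∞)`. -/
theorem concaveOn_g :
    ConcaveOn ℝ (Set.Ioi (1 : ℝ))
      (fun x : ℝ => Real.exp (1 / x) * x ^ (1 + 1 / (2 * x)) * Real.exp (-1)) := by
  have hmain : ConcaveOn ℝ (Set.Ioi (1:ℝ)) (fun x => Real.exp (h0aux x)) := by
    apply concaveOn_of_hasDerivWithinAt2_nonpos (convex_Ioi 1)
      (f' := fun x => Real.exp (h0aux x) * h1aux x)
      (f'' := fun x => Real.exp (h0aux x) * h1aux x * h1aux x + Real.exp (h0aux x) * h2aux x)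
    · intro x hx
      exact ((h0aux_deriv (lt_trans one_pos hx)).exp).continuousAt.continuousWithinAt
    · simp only [interior_Ioi]
      intro x hx
      exact ((h0aux_deriv (lt_trans one_pos hx)).exp).hasDerivWithinAt
    · simp only [interior_Ioi]
      intro x hx
      exact (((h0aux_deriv (lt_trans one_pos hx)).exp).mul
        (h1aux_deriv (lt_trans one_pos hx))).hasDerivWithinAt
    · simp only [interior_Ioi]
      intro x hx
      exact second_nonpos hx
  refine hmain.congr fun x hx => ?_
  have hx0 : (0:ℝ) < x := lt_trans one_pos hx
  rw [Real.rpow_def_of_pos hx0, ← Real.exp_add, ← Real.exp_add]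
  congr 1
  unfold h0aux
  field_simp
  ring
end

section
/- Let A be an n×n matrix with real entries in the interval [0,1], and suppose that for each i the sum of the entries in the i-th row of A is at most r_i, where r_i > 0 and ⌈r_i⌉ ≤ n. Then there exists an n×n (0,1)-matrix A' such that the i-th row of A' contains exactly ⌈r_i⌉ ones for each i, and per A ≤ per A'. -/
open Finset Matrix

private lemma permanent_nonneg' {n : ℕ} (M : Matrix (Fin n) (Fin n) ℝ)
    (h : ∀ i j, 0 ≤ M i j) : 0 ≤ M.permanent :=
  Finset.sum_nonneg fun σ _ => Finset.prod_nonneg fun i _ => h _ _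

/-- Expansion of the permanent along row `a`. -/
private lemma permanent_expand_row {n : ℕ} (M : Matrix (Fin n) (Fin n) ℝ) (a : Fin n) :
    M.permanent = ∑ j, M a j * (M.updateRow a (Pi.single j 1)).permanent := by
  unfold Matrix.permanent
  simp_rw [Finset.mul_sum]
  rw [Finset.sum_comm]
  refine Finset.sum_congr rfl fun σ _ => ?_
  have key : ∀ j : Fin n, ∏ i, (M.updateRow a (Pi.single j (1:ℝ))) (σ i) i
      = (Pi.single j (1:ℝ) : Fin n → ℝ) (σ⁻¹ a) * ∏ i ∈ univ.erase (σ⁻¹ a), M (σ i) i := by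
    intro j
    rw [← Finset.mul_prod_erase _ _ (mem_univ (σ⁻¹ a))]
    congr 1
    · have : σ (σ⁻¹ a) = a := σ.apply_symm_apply a
      rw [this, Matrix.updateRow_self]
    · refine Finset.prod_congr rfl fun i hi => ?_
      refine congrFun (Matrix.updateRow_ne ?_) i
      intro h
      exact (Finset.mem_erase.mp hi).1 (by rw [← h]; exact (σ.symm_apply_apply i).symm)
  simp_rw [key]
  rw [Finset.sum_eq_single (σ⁻¹ a)]
  · rw [Pi.single_eq_same, one_mul, ← Finset.mul_prod_erase _ _ (mem_univ (σ⁻¹ a)),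
      show σ (σ⁻¹ a) = a from σ.apply_symm_apply a]
  · intro j _ hj
    rw [Pi.single_eq_of_ne (fun h => hj h.symm), zero_mul, mul_zero]
  · intro h; exact absurd (mem_univ _) h

/-- Key selection lemma: a `[0,1]`-weighted sum with weight total `≤ k` is at most
the sum of the `k` largest values. -/
private lemma exists_good_set {n k : ℕ} (hk : 0 < k) (hkn : k ≤ n)
    (c a : Fin n → ℝ) (hc : ∀ j, 0 ≤ c j) (ha0 : ∀ j, 0 ≤ a j) (ha1 : ∀ j, a j ≤ 1)
    (hsum : ∑ j, a j ≤ (k : ℝ)) :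
    ∃ S : Finset (Fin n), S.card = k ∧ ∑ j, a j * c j ≤ ∑ j ∈ S, c j := by
  have hne : ((univ : Finset (Fin n)).powersetCard k).Nonempty := by
    obtain ⟨S, hS, hcard⟩ := Finset.exists_subset_card_eq
      (show k ≤ (univ : Finset (Fin n)).card by simpa using hkn)
    exact ⟨S, Finset.mem_powersetCard.mpr ⟨hS, hcard⟩⟩
  obtain ⟨S, hSmem, hSmax⟩ := Finset.exists_max_image _ (fun S => ∑ j ∈ S, c j) hne
  obtain ⟨-, hScard⟩ := Finset.mem_powersetCard.mp hSmem
  refine ⟨S, hScard, ?_⟩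
  have hSne : S.Nonempty := Finset.card_pos.mp (hScard ▸ hk)
  obtain ⟨j0, hj0, hj0min⟩ := Finset.exists_min_image S c hSne
  set m := c j0 with hm
  have hm0 : 0 ≤ m := hc j0
  have hout : ∀ j ∉ S, c j ≤ m := by
    intro j hj
    by_contra h
    push_neg at h
    have hins : j ∉ S.erase j0 := fun hmem => hj (Finset.mem_of_mem_erase hmem)
    have hgt : ∑ t ∈ S, c t < ∑ t ∈ insert j (S.erase j0), c t := by
      rw [Finset.sum_insert hins, Finset.sum_erase_eq_sub hj0]
      linarith
    have hmem' : insert j (S.erase j0) ∈ (univ : Finset (Fin n)).powersetCard k := by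
      refine Finset.mem_powersetCard.mpr ⟨Finset.subset_univ _, ?_⟩
      rw [Finset.card_insert_of_notMem hins, Finset.card_erase_of_mem hj0, hScard]
      omega
    exact absurd (hSmax _ hmem') (not_le.mpr hgt)
  have h1 : ∑ j ∈ Sᶜ, a j * c j ≤ ((k : ℝ) - ∑ j ∈ S, a j) * m := by
    have e1 : ∑ j ∈ Sᶜ, a j * c j ≤ ∑ j ∈ Sᶜ, a j * m :=
      Finset.sum_le_sum fun j hj =>
        mul_le_mul_of_nonneg_left (hout j (Finset.mem_compl.mp hj)) (ha0 j)
    have e2 : ∑ j ∈ Sᶜ, a j * m = (∑ j ∈ Sᶜ, a j) * m := (Finset.sum_mul _ _ _).symm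
    have e3 : (∑ j ∈ Sᶜ, a j) ≤ (k : ℝ) - ∑ j ∈ S, a j := by
      have := Finset.sum_add_sum_compl S a
      linarith
    calc ∑ j ∈ Sᶜ, a j * c j ≤ (∑ j ∈ Sᶜ, a j) * m := by rw [← e2]; exact e1
      _ ≤ ((k : ℝ) - ∑ j ∈ S, a j) * m := mul_le_mul_of_nonneg_right e3 hm0
  have h3 : ∑ j ∈ S, (a j * c j + (1 - a j) * m)
      = ∑ j ∈ S, a j * c j + ((k : ℝ) - ∑ j ∈ S, a j) * m := by
    rw [Finset.sum_add_distrib]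
    congr 1
    rw [← Finset.sum_mul]
    congr 1
    rw [Finset.sum_sub_distrib, Finset.sum_const, hScard, nsmul_eq_mul, mul_one]
  have h2 : ∑ j ∈ S, (a j * c j + (1 - a j) * m) ≤ ∑ j ∈ S, c j :=
    Finset.sum_le_sum fun j hj => by nlinarith [hj0min j hj, ha1 j, ha0 j]
  have hsplit := Finset.sum_add_sum_compl S (fun j => a j * c j)
  linarith

/-- if `A` is an `n × n` matrix with entries in `[0,1]` whose `i`-th row sum is
at most `r i` (with `r i > 0` and `⌈r i⌉ ≤ n`), then there is an `n × n` (0,1)-matrix `A'`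
whose `i`-th row contains exactly `⌈r i⌉` ones and with `per A ≤ per A'`. -/
theorem exists_zero_one_matrix_ge_permanent {n : ℕ} (A : Matrix (Fin n) (Fin n) ℝ)
    (r : Fin n → ℝ)
    (hA0 : ∀ i j, 0 ≤ A i j) (hA1 : ∀ i j, A i j ≤ 1)
    (hr : ∀ i, 0 < r i) (hrn : ∀ i, ⌈r i⌉₊ ≤ n)
    (hrow : ∀ i, ∑ j, A i j ≤ r i) :
    ∃ A' : Matrix (Fin n) (Fin n) ℝ,
      (∀ i j, A' i j = 0 ∨ A' i j = 1) ∧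
      (∀ i, (Finset.univ.filter fun j => A' i j = 1).card = ⌈r i⌉₊) ∧
      A.permanent ≤ A'.permanent := by
  suffices H : ∀ (T : Finset (Fin n)) (A : Matrix (Fin n) (Fin n) ℝ),
      (∀ i j, 0 ≤ A i j) → (∀ i j, A i j ≤ 1) →
      (∀ i, i ∈ T → ∑ j, A i j ≤ r i) →
      (∀ i, i ∉ T → (∀ j, A i j = 0 ∨ A i j = 1) ∧
        (Finset.univ.filter fun j => A i j = 1).card = ⌈r i⌉₊) →
      ∃ A' : Matrix (Fin n) (Fin n) ℝ,
        (∀ i j, A' i j = 0 ∨ A' i j = 1) ∧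
        (∀ i, (Finset.univ.filter fun j => A' i j = 1).card = ⌈r i⌉₊) ∧
        A.permanent ≤ A'.permanent by
    exact H univ A hA0 hA1 (fun i _ => hrow i) (fun i hi => absurd (mem_univ i) hi)
  intro T
  induction T using Finset.induction_on with
  | empty =>
    intro A h0 h1 _ hfix
    exact ⟨A, fun i j => (hfix i (Finset.notMem_empty i)).1 j,
      fun i => (hfix i (Finset.notMem_empty i)).2, le_refl _⟩
  | @insert a T haT ih =>
    intro A h0 h1 hsum hfix
    set k := ⌈r a⌉₊ with hkdef
    have hk : 0 < k := Nat.ceil_pos.mpr (hr a)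
    have hkn : k ≤ n := hrn a
    set c : Fin n → ℝ := fun j => (A.updateRow a (Pi.single j 1)).permanent with hc_def
    have hc : ∀ j, 0 ≤ c j := by
      intro j
      apply permanent_nonneg'
      intro i j'
      rw [Matrix.updateRow_apply]
      split_ifs with h
      · rw [Pi.single_apply]; split_ifs <;> norm_num
      · exact h0 i j'
    have hsa : ∑ j, A a j ≤ (k : ℝ) :=
      le_trans (hsum a (Finset.mem_insert_self a T)) (Nat.le_ceil (r a))
    obtain ⟨S, hScard, hSle⟩ := exists_good_set hk hkn c (A a) hc
      (fun j => h0 a j) (fun j => h1 a j) hsa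
    set v : Fin n → ℝ := fun j => if j ∈ S then 1 else 0 with hv_def
    set A₁ := A.updateRow a v with hA₁def
    have hA₁ne : ∀ i, i ≠ a → A₁ i = A i := fun i h => Matrix.updateRow_ne h
    have hA₁a : A₁ a = v := Matrix.updateRow_self
    have hupd : ∀ j : Fin n, A₁.updateRow a (Pi.single j 1) = A.updateRow a (Pi.single j 1) := by
      intro j
      ext x y
      rw [Matrix.updateRow_apply, Matrix.updateRow_apply]
      split_ifs with h
      · rfl
      · rw [hA₁ne x h]
    have hperm : A.permanent ≤ A₁.permanent := by
      rw [permanent_expand_row A a, permanent_expand_row A₁ a]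
      simp_rw [hupd, hA₁a]
      have : ∑ j, v j * c j = ∑ j ∈ S, c j := by
        rw [hv_def]
        simp only [ite_mul, one_mul, zero_mul]
        rw [Finset.sum_ite_mem, Finset.univ_inter]
      rw [this]
      exact hSle
    have hfilter : (Finset.univ.filter fun j => A₁ a j = 1) = S := by
      ext j
      simp only [Finset.mem_filter, Finset.mem_univ, true_and, hA₁a, hv_def]
      split_ifs with h
      · simp [h]
      · simp [h]
    obtain ⟨A', p1, p2, p3⟩ := ih A₁
      (by
        intro i j
        by_cases h : i = a
        · subst h; rw [hA₁a]; by_cases hjS : j ∈ S <;> simp [hv_def, hjS]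
        · rw [hA₁ne i h]; exact h0 i j)
      (by
        intro i j
        by_cases h : i = a
        · subst h; rw [hA₁a]; by_cases hjS : j ∈ S <;> simp [hv_def, hjS]
        · rw [hA₁ne i h]; exact h1 i j)
      (by
        intro i hi
        have hne : i ≠ a := fun h => haT (h ▸ hi)
        rw [hA₁ne i hne]
        exact hsum i (Finset.mem_insert_of_mem hi))
      (by
        intro i hi
        by_cases h : i = a
        · subst h
          constructor
          · intro j; rw [hA₁a]; by_cases hjS : j ∈ S <;> simp [hv_def, hjS]
          · rw [hfilter, hScard]
        · have : i ∉ insert a T := by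
            simp only [Finset.mem_insert, not_or]
            exact ⟨h, hi⟩
          have := hfix i this
          rw [hA₁ne i h]
          exact this)
    exact ⟨A', p1, p2, le_trans hperm p3⟩
end
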